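/- arXiv:2210.14247 — 5 statements merged into one kernel-verified Lean document; each statement's English description precedes it below -/
import Mathlib

section
/- Let ∼_Zero denote the equivalence relation on evZ generated by A ∼ Zero_{a,k}(A) for all a ∈ {1,2} and k ∈ ℕ. Then for all A, B ∈ evZ: A ∼_Zero B if and only if ⟨SS(A), a⟩ = ⟨SS(B), a⟩ for every matrix composition a over M_d. -/
open scoped Classical

namespace TwoParam

/-! ### The free commutative monoid on `d` generators, written additively -/

abbrev Md (d : ℕ) := Fin d →₀ ℕ

/-! ### Raw matrices over `Md d` and matrix compositions

A raw matrix is a function `ℕ → ℕ → Md d` together with a number of rows and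
columns, normalized to be `0` (= the neutral element `ε`) outside the range.
The empty composition is the `0 × 0` matrix. -/

structure RawMat (d : ℕ) where
  rows : ℕ
  cols : ℕ
  entry : ℕ → ℕ → Md d
  entry_eq_zero : ∀ i j : ℕ, rows ≤ i ∨ cols ≤ j → entry i j = 0

namespace RawMat

variable {d : ℕ}

/-- A matrix composition: no row and no column consists entirely of `ε`.
(The empty `0 × 0` matrix vacuously satisfies this.) -/
def IsComp (a : RawMat d) : Prop :=
  (∀ i < a.rows, ∃ j < a.cols, a.entry i j ≠ 0) ∧
  (∀ j < a.cols, ∃ i < a.rows, a.entry i j ≠ 0)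

/-- The empty composition. -/
def empty (d : ℕ) : RawMat d := ⟨0, 0, fun _ _ => 0, fun _ _ _ => rfl⟩

/-- Diagonal block concatenation of two matrices. -/
def diag (a b : RawMat d) : RawMat d where
  rows := a.rows + b.rows
  cols := a.cols + b.cols
  entry := fun i j =>
    if i < a.rows ∧ j < a.cols then a.entry i j
    else if a.rows ≤ i ∧ a.cols ≤ j then b.entry (i - a.rows) (j - a.cols)
    else 0
  entry_eq_zero := by
    intro i j h
    try dsimp only
    split_ifs with h1 h2
    · exact absurd h (by omega)
    · exact b.entry_eq_zero _ _ (by omega)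
    · rfl

/-- A non-empty composition is connected if it admits no nontrivial
block-diagonal decomposition into compositions. -/
def Connected (a : RawMat d) : Prop :=
  a.IsComp ∧ a ≠ empty d ∧
    ∀ b c : RawMat d, b.IsComp → c.IsComp → a = b.diag c →
      b = empty d ∨ c = empty d

/-- Total weight of a matrix: the homomorphism `Md d → ℕ` sending every
generator to `1`, summed over all entries. -/
def weight (a : RawMat d) : ℕ :=
  ∑ i ∈ Finset.range a.rows, ∑ j ∈ Finset.range a.cols,
    (a.entry i j).sum fun _ e => e

end RawMat

/-! ### Evaluation of monomials -/

/-- For `z ∈ R^d` and `m ∈ Md d`, the evaluation `z^(m) = ∏ j, z j ^ m j`. -/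
def evalMon {d : ℕ} {R : Type*} [CommRing R] (z : Fin d → R) (m : Md d) : R :=
  m.prod fun j e => z j ^ e

/-! ### Two-parameter sums signature -/

/-- Strictly increasing chains of length `m` with values in `[lo, hi)`
(0-based indexing of the data). -/
noncomputable def chainsB (m lo hi : ℕ) : Finset (Fin m → ℕ) :=
  (Fintype.piFinset fun _ : Fin m => Finset.Ico lo hi).filter StrictMono

/-- The bounded two-parameter sums signature coefficient `⟨SS_{l;r}(Z), a⟩`. -/
noncomputable def SSb {d : ℕ} {R : Type*} [CommRing R]
    (Z : ℕ × ℕ → Fin d → R) (l r : ℕ × ℕ) (a : RawMat d) : R :=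
  ∑ ι ∈ chainsB a.rows l.1 r.1, ∑ κ ∈ chainsB a.cols l.2 r.2,
    ∏ s : Fin a.rows, ∏ t : Fin a.cols, evalMon (Z (ι s, κ t)) (a.entry s t)

/-- The (unbounded) two-parameter sums signature coefficient `⟨SS(Z), a⟩`,
for finitely supported `Z` a finite sum. -/
noncomputable def SSc {d : ℕ} {R : Type*} [CommRing R]
    (Z : ℕ × ℕ → Fin d → R) (a : RawMat d) : R :=
  ∑ᶠ ι ∈ {f : Fin a.rows → ℕ | StrictMono f},
    ∑ᶠ κ ∈ {g : Fin a.cols → ℕ | StrictMono g},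
      ∏ s : Fin a.rows, ∏ t : Fin a.cols, evalMon (Z (ι s, κ t)) (a.entry s t)

/-! ### Quasi-shuffle surjections -/

/-- `qShSet m s j`: surjections `{1,…,m+s} ↠ {1,…,j}` that are strictly
increasing on the first `m` and on the last `s` arguments. -/
noncomputable def qShSet (m s j : ℕ) : Finset (Fin (m + s) → Fin j) :=
  Finset.univ.filter fun q =>
    Function.Surjective q ∧
    (∀ u v : Fin (m + s), u < v → (v : ℕ) < m → q u < q v) ∧
    (∀ u v : Fin (m + s), u < v → m ≤ (u : ℕ) → q u < q v)

/-- The summand `c^{p,q}` of the two-parameter quasi-shuffle: the `j × k`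
matrix with entries `⋆_{u ∈ p⁻¹(x), v ∈ q⁻¹(y)} diag(a,b)_{u,v}`. -/
noncomputable def qshMat {d : ℕ} (a b : RawMat d) {j k : ℕ}
    (p : Fin (a.rows + b.rows) → Fin j) (q : Fin (a.cols + b.cols) → Fin k) :
    RawMat d where
  rows := j
  cols := k
  entry := fun x y =>
    if hx : x < j then
      if hy : y < k then
        ∑ u ∈ Finset.univ.filter (fun u => p u = ⟨x, hx⟩),
          ∑ v ∈ Finset.univ.filter (fun v => q v = ⟨y, hy⟩),
            (a.diag b).entry u v
      else 0
    else 0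
  entry_eq_zero := by
    intro x y h
    try dsimp only
    split_ifs with hx hy
    · exact absurd h (by omega)
    · rfl
    · rfl

/-- The two-parameter quasi-shuffle `a ⧢ b`, as an element of the free
`R`-module on matrices.  (The empty index sets for `j` or `k` outside
`[0, rows+rows]` resp. `[0, cols+cols]` implement the conventions
`e ⧢ a = a ⧢ e = a` and `e ⧢ e = e`.) -/
noncomputable def qsh {d : ℕ} (R : Type*) [CommRing R] (a b : RawMat d) :
    RawMat d →₀ R :=
  ∑ j ∈ Finset.range (a.rows + b.rows + 1),
    ∑ k ∈ Finset.range (a.cols + b.cols + 1),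
      ∑ p ∈ qShSet a.rows b.rows j,
        ∑ q ∈ qShSet a.cols b.cols k,
          Finsupp.single (qshMat a b p q) 1

/-- Bilinear extension of the quasi-shuffle to the free module. -/
noncomputable def qshL {d : ℕ} {R : Type*} [CommRing R]
    (F G : RawMat d →₀ R) : RawMat d →₀ R :=
  F.sum fun a ra => G.sum fun b rb => (ra * rb) • qsh R a b

/-! ### Two-parameter data: eventually zero / eventually constant functions -/

variable {V : Type*}

/-- Eventually zero two-parameter data: finite support. -/
def EvZ [Zero V] (X : ℕ × ℕ → V) : Prop := (Function.support X).Finite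

/-- Eventually constant two-parameter data: there is a box outside of which
`X` is constant; i.e. whenever two values differ, one of the two indices lies
in the box. -/
def EvC (X : ℕ × ℕ → V) : Prop :=
  ∃ n : ℕ × ℕ, ∀ i j : ℕ × ℕ, X i ≠ X j →
    (i.1 ≤ n.1 ∧ i.2 ≤ n.2) ∨ (j.1 ≤ n.1 ∧ j.2 ≤ n.2)

/-- The coordinate of `i` along the axis `a` (axis `0` = rows, `1` = cols). -/
def axC (a : Fin 2) (i : ℕ × ℕ) : ℕ := if a = 0 then i.1 else i.2

/-- Shift an index one step down along the axis `a`. -/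
def shiftD (a : Fin 2) (i : ℕ × ℕ) : ℕ × ℕ :=
  if a = 0 then (i.1 - 1, i.2) else (i.1, i.2 - 1)

/-- The zero insertion operator (0-based position `k`): insert a zero
row/column at position `k` along axis `a`. -/
def zeroIns [Zero V] (a : Fin 2) (k : ℕ) (X : ℕ × ℕ → V) : ℕ × ℕ → V :=
  fun i => if axC a i < k then X i else if axC a i = k then 0 else X (shiftD a i)

/-- The warping operator (0-based position `k`): duplicate the row/column at
position `k` along axis `a`. -/
def warp (a : Fin 2) (k : ℕ) (X : ℕ × ℕ → V) : ℕ × ℕ → V :=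
  fun i => if axC a i ≤ k then X i else X (shiftD a i)

/-- The two-parameter (forward) difference operator `δ`. -/
def diffOp [AddCommGroup V] (X : ℕ × ℕ → V) : ℕ × ℕ → V := fun i =>
  X (i.1 + 1, i.2 + 1) - X (i.1 + 1, i.2) - X (i.1, i.2 + 1) + X (i.1, i.2)

/-- The summation operator `ς`, a right inverse of `δ`:
`(ς Z)_{i,j} = Σ_{s ≥ i} Σ_{t ≥ j} Z_{s,t}`. -/
noncomputable def sigmaOp [AddCommMonoid V] (Z : ℕ × ℕ → V) : ℕ × ℕ → V :=
  fun i => ∑ᶠ p ∈ {p : ℕ × ℕ | i.1 ≤ p.1 ∧ i.2 ≤ p.2}, Z p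

/-- The set of all `n ∈ ℕ²` such that `X` is determined inside the
`n.1 × n.2` upper-left box (0-based size/count convention). -/
def sizeSetC (X : ℕ × ℕ → V) : Set (ℕ × ℕ) :=
  {n | ∀ i j : ℕ × ℕ, X i ≠ X j →
    (i.1 < n.1 ∧ i.2 < n.2) ∨ (j.1 < n.1 ∧ j.2 < n.2)}

/-- `rows(X)` for eventually constant `X`: first component of the least
element of `sizeSetC X`. -/
noncomputable def rowsC (X : ℕ × ℕ → V) : ℕ := sInf (Prod.fst '' sizeSetC X)

/-- `cols(X)` for eventually constant `X`. -/
noncomputable def colsC (X : ℕ × ℕ → V) : ℕ := sInf (Prod.snd '' sizeSetC X)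

/-- `rows(Z)` for eventually zero `Z`, defined via the support. -/
noncomputable def rowsZ [Zero V] (Z : ℕ × ℕ → V) : ℕ :=
  sInf {m : ℕ | ∀ i : ℕ × ℕ, Z i ≠ 0 → i.1 < m}

/-- `cols(Z)` for eventually zero `Z`, defined via the support. -/
noncomputable def colsZ [Zero V] (Z : ℕ × ℕ → V) : ℕ :=
  sInf {m : ℕ | ∀ i : ℕ × ℕ, Z i ≠ 0 → i.2 < m}

/-- Diagonal concatenation `A ⊘ B` on eventually zero functions,
with `rows`/`cols` taken in the eventually-constant sense. -/
noncomputable def dconc [AddCommGroup V] (A B : ℕ × ℕ → V) : ℕ × ℕ → V :=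
  A + (zeroIns 0 0)^[rowsC A] ((zeroIns 1 0)^[colsC A] B)

/-- Diagonal concatenation `A ⊘ B` on eventually zero functions,
with `rows`/`cols` taken in the support sense. -/
noncomputable def dconcZ [AddCommGroup V] (A B : ℕ × ℕ → V) : ℕ × ℕ → V :=
  A + (zeroIns 0 0)^[rowsZ A] ((zeroIns 1 0)^[colsZ A] B)

/-- Concatenation along the diagonal `X ⊠ Y` on eventually constant
functions: `ς(δX) + Warp_{1,1}^{rows X}(Warp_{2,1}^{cols X}(Y))`. -/
noncomputable def bconc [AddCommGroup V] (X Y : ℕ × ℕ → V) : ℕ × ℕ → V :=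
  sigmaOp (diffOp X) + (warp 0 0)^[rowsC X] ((warp 1 0)^[colsC X] Y)


/-! ### Two-parameter quasisymmetric functions -/

/-- Monomials in the commuting variables `x_{i,j}`, `(i,j) ∈ ℕ × ℕ`. -/
abbrev Mon := (ℕ × ℕ) →₀ ℕ

/-- Total degree of a monomial. -/
def mdeg (m : Mon) : ℕ := m.sum fun _ e => e

/-- A formal power series (given by its coefficient function) has finite
total degree. -/
def FinDeg {R : Type*} [Zero R] (f : Mon → R) : Prop :=
  ∃ D : ℕ, ∀ m : Mon, f m ≠ 0 → mdeg m ≤ D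

/-- `ℕ₀`-valued raw matrices, normalized to vanish outside the range. -/
structure NMat where
  rows : ℕ
  cols : ℕ
  entry : ℕ → ℕ → ℕ
  entry_eq_zero : ∀ i j : ℕ, rows ≤ i ∨ cols ≤ j → entry i j = 0

namespace NMat

/-- An `ℕ₀`-matrix composition: no zero row and no zero column. -/
def IsComp (a : NMat) : Prop :=
  (∀ i < a.rows, ∃ j < a.cols, a.entry i j ≠ 0) ∧
  (∀ j < a.cols, ∃ i < a.rows, a.entry i j ≠ 0)

/-- The empty composition. -/
def empty : NMat := ⟨0, 0, fun _ _ => 0, fun _ _ _ => rfl⟩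

/-- Diagonal block concatenation. -/
def diag (a b : NMat) : NMat where
  rows := a.rows + b.rows
  cols := a.cols + b.cols
  entry := fun i j =>
    if i < a.rows ∧ j < a.cols then a.entry i j
    else if a.rows ≤ i ∧ a.cols ≤ j then b.entry (i - a.rows) (j - a.cols)
    else 0
  entry_eq_zero := by
    intro i j h
    try dsimp only
    split_ifs with h1 h2
    · exact absurd h (by omega)
    · exact b.entry_eq_zero _ _ (by omega)
    · rfl

end NMat

/-- The monomial `∏_{s,t} x_{ι_s, κ_t}^{a_{s,t}}` attached to a matrix `a`
and chains `ι`, `κ`. -/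
noncomputable def monomialOf (a : NMat) (ι : Fin a.rows → ℕ) (κ : Fin a.cols → ℕ) : Mon :=
  ∑ s : Fin a.rows, ∑ t : Fin a.cols, Finsupp.single (ι s, κ t) (a.entry s t)

/-- The monomial quasisymmetric function `M_a` (as a coefficient function):
each monomial `∏ x_{ι_s,κ_t}^{a_{s,t}}` for strictly increasing chains occurs
with coefficient `1`.  In particular `M_e = 1`. -/
noncomputable def monQ {R : Type*} [CommRing R] (a : NMat) : Mon → R := fun m =>
  if ∃ (ι : Fin a.rows → ℕ) (κ : Fin a.cols → ℕ),
      StrictMono ι ∧ StrictMono κ ∧ m = monomialOf a ι κ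
  then 1 else 0

/-- Two-parameter quasisymmetric function: finite degree, and for every
matrix composition `a` and all strictly increasing chains `ι`, `κ`, the
coefficients of `∏ x_{ι_s,κ_t}^{a_{s,t}}` and of `∏ x_{s,t}^{a_{s,t}}`
coincide. -/
def IsQSym {R : Type*} [CommRing R] (f : Mon → R) : Prop :=
  FinDeg f ∧ ∀ a : NMat, a.IsComp →
    ∀ (ι : Fin a.rows → ℕ) (κ : Fin a.cols → ℕ), StrictMono ι → StrictMono κ →
      f (monomialOf a ι κ) =
        f (monomialOf a (fun s => (s : ℕ)) (fun t => (t : ℕ)))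

/-- Product of formal power series (Cauchy product of coefficient
functions). -/
noncomputable def mulF {R : Type*} [CommRing R] (f g : Mon → R) : Mon → R :=
  fun m => ∑ p ∈ Finset.HasAntidiagonal.antidiagonal m, f p.1 * g p.2

/-- Two-parameter quasisymmetric functions form an `R`-submodule of the
module of coefficient functions. -/
noncomputable def QSymSub (R : Type*) [CommRing R] : Submodule R (Mon → R) where
  carrier := {f | IsQSym f}
  add_mem' := by
    rintro f g ⟨⟨Df, hDf⟩, hf⟩ ⟨⟨Dg, hDg⟩, hg⟩
    refine ⟨⟨max Df Dg, ?_⟩, ?_⟩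
    · intro m hm
      by_contra hc
      push_neg at hc
      have h1 : f m = 0 := by
        by_contra h
        have := hDf m h
        omega
      have h2 : g m = 0 := by
        by_contra h
        have := hDg m h
        omega
      apply hm
      show f m + g m = 0
      rw [h1, h2, add_zero]
    · intro a ha ι κ hι hκ
      show f _ + g _ = f _ + g _
      rw [hf a ha ι κ hι hκ, hg a ha ι κ hι hκ]
  zero_mem' := ⟨⟨0, fun _ hm => absurd rfl hm⟩, fun _ _ _ _ _ _ => rfl⟩
  smul_mem' := by
    rintro c f ⟨⟨Df, hDf⟩, hf⟩
    refine ⟨⟨Df, ?_⟩, ?_⟩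
    · intro m hm
      apply hDf
      intro h
      apply hm
      show c • f m = 0
      rw [h, smul_zero]
    · intro a ha ι κ hι hκ
      show c • f _ = c • f _
      rw [hf a ha ι κ hι hκ]

/-- Index shift used by the free analogue of zero insertion: indices with
coordinate `≥ k` along axis `a` are shifted up by one (axis `0` = rows). -/
def liftIdx (a : Fin 2) (k : ℕ) (i : ℕ × ℕ) : ℕ × ℕ :=
  if a = 0 then (if i.1 < k then i else (i.1 + 1, i.2))
  else (if i.2 < k then i else (i.1, i.2 + 1))

/-- The free analogue of zero insertion on formal power series: the algebra
endomorphism sending `x_i ↦ x_i` for `i_a < k`, `x_i ↦ 0` for `i_a = k` and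
`x_i ↦ x_{i - e_a}` for `i_a > k` (0-based position `k`).  On coefficient
functions it is given by precomposition with the index lift. -/
noncomputable def zeroF {R : Type*} [CommRing R] (a : Fin 2) (k : ℕ)
    (f : Mon → R) : Mon → R :=
  fun m => f (m.mapDomain (liftIdx a k))

/-- The quasi-shuffle summand `c^{p,q}` for `ℕ₀`-matrices. -/
noncomputable def nQshMat (a b : NMat) {j k : ℕ}
    (p : Fin (a.rows + b.rows) → Fin j) (q : Fin (a.cols + b.cols) → Fin k) :
    NMat where
  rows := j
  cols := k
  entry := fun x y =>
    if hx : x < j then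
      if hy : y < k then
        ∑ u ∈ Finset.univ.filter (fun u => p u = ⟨x, hx⟩),
          ∑ v ∈ Finset.univ.filter (fun v => q v = ⟨y, hy⟩),
            (a.diag b).entry u v
      else 0
    else 0
  entry_eq_zero := by
    intro x y h
    try dsimp only
    split_ifs with hx hy
    · exact absurd h (by omega)
    · rfl
    · rfl

/-- One-dimensional two-parameter sums signature coefficient `⟨SS(Z), a⟩`. -/
noncomputable def SScN {K : Type*} [CommRing K] (Z : ℕ × ℕ → K) (a : NMat) : K :=
  ∑ᶠ ι ∈ {f : Fin a.rows → ℕ | StrictMono f},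
    ∑ᶠ κ ∈ {g : Fin a.cols → ℕ | StrictMono g},
      ∏ s : Fin a.rows, ∏ t : Fin a.cols, Z (ι s, κ t) ^ a.entry s t

/-- Evaluation of a formal power series at finitely supported data. -/
noncomputable def evalSeries {K : Type*} [CommRing K] (f : Mon → K)
    (Z : ℕ × ℕ → K) : K :=
  ∑ᶠ m : Mon, f m * m.prod fun i e => Z i ^ e

end TwoParam

namespace S6

open TwoParam

variable {d : ℕ} {R : Type*} [CommRing R]

/-! ### evalMon lemmas -/

lemma evalMon_zero_of_ne {m : Md d} (hm : m ≠ 0) :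
    evalMon (0 : Fin d → R) m = 0 := by
  obtain ⟨j, hj⟩ := Finsupp.ne_iff.mp hm
  rw [Finsupp.coe_zero, Pi.zero_apply] at hj
  rw [evalMon, Finsupp.prod]
  refine Finset.prod_eq_zero (Finsupp.mem_support_iff.mpr hj) ?_
  simp [zero_pow hj]

lemma evalMon_zero_right (z : Fin d → R) : evalMon z 0 = 1 := by
  simp [evalMon]

lemma evalMon_single (z : Fin d → R) (j : Fin d) :
    evalMon z (Finsupp.single j 1) = z j := by
  rw [evalMon]
  rw [Finsupp.prod_single_index (h := fun j e => z j ^ e) (pow_zero (z j))]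
  exact pow_one (z j)

lemma evalMon_add (z : Fin d → R) (m1 m2 : Md d) :
    evalMon z (m1 + m2) = evalMon z m1 * evalMon z m2 :=
  Finsupp.prod_add_index' (fun j => pow_zero (z j)) (fun j e1 e2 => pow_add (z j) e1 e2)

/-! ### strict mono chains -/

lemma strictMono_le_apply' {m : ℕ} {f : Fin m → ℕ} (hf : StrictMono f) :
    ∀ v (h : v < m), v ≤ f ⟨v, h⟩ := by
  intro v
  induction v with
  | zero => intro h; exact Nat.zero_le _
  | succ v ih =>
      intro h
      have h1 : v < m := by omega
      have h2 := hf (show (⟨v, h1⟩ : Fin m) < ⟨v + 1, h⟩ by simp [Fin.lt_def])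
      have h3 := ih h1
      omega

lemma strictMono_le_apply {m : ℕ} {f : Fin m → ℕ} (hf : StrictMono f) (s : Fin m) :
    (s : ℕ) ≤ f s := by
  have := strictMono_le_apply' hf s.1 s.2
  simpa using this

lemma mem_chainsB {m lo hi : ℕ} {f : Fin m → ℕ} :
    f ∈ chainsB m lo hi ↔ (∀ s, lo ≤ f s ∧ f s < hi) ∧ StrictMono f := by
  simp [chainsB, Fintype.mem_piFinset, Finset.mem_Ico, forall_and]

lemma strictMono_ge_apply' {m : ℕ} {f : Fin m → ℕ} (hf : StrictMono f)
    (hb : ∀ s, f s < m) : ∀ w (h : w < m), f ⟨m - 1 - w, by omega⟩ ≤ m - 1 - w := by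
  intro w
  induction w with
  | zero =>
      intro h
      have := hb ⟨m - 1 - 0, by omega⟩
      omega
  | succ w ih =>
      intro h
      have h1 : w < m := by omega
      have h2 := ih h1
      have h3 : (⟨m - 1 - (w + 1), by omega⟩ : Fin m) < ⟨m - 1 - w, by omega⟩ := by
        rw [Fin.lt_def]; simp; omega
      have h4 := hf h3
      omega

lemma chainsB_self (m : ℕ) : chainsB m 0 m = {fun s : Fin m => (s : ℕ)} := by
  ext f
  rw [mem_chainsB, Finset.mem_singleton]
  constructor
  · rintro ⟨hbound, hmono⟩
    funext s
    have h1 : (s : ℕ) ≤ f s := strictMono_le_apply hmono s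
    have hsm : (s : ℕ) < m := s.isLt
    have h2 := strictMono_ge_apply' hmono (fun u => (hbound u).2) (m - 1 - s) (by omega)
    have h3 : m - 1 - (m - 1 - (s : ℕ)) = (s : ℕ) := by omega
    have h4 : (⟨m - 1 - (m - 1 - (s : ℕ)), by omega⟩ : Fin m) = s := Fin.ext h3
    rw [h4, h3] at h2
    omega
  · rintro rfl
    refine ⟨fun s => ⟨Nat.zero_le _, s.isLt⟩, fun u v huv => ?_⟩
    exact huv

/-! ### dead row / dead column -/

lemma prod_eq_zero_row {Z : ℕ × ℕ → Fin d → R} {a : RawMat d} (ha : a.IsComp)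
    {ι : Fin a.rows → ℕ} {κ : Fin a.cols → ℕ} (s0 : Fin a.rows)
    (h : ∀ c, Z (ι s0, c) = 0) :
    ∏ s : Fin a.rows, ∏ t : Fin a.cols, evalMon (Z (ι s, κ t)) (a.entry s t) = 0 := by
  obtain ⟨t0, ht0, hne⟩ := ha.1 s0 s0.isLt
  refine Finset.prod_eq_zero (Finset.mem_univ s0) ?_
  refine Finset.prod_eq_zero (Finset.mem_univ (⟨t0, ht0⟩ : Fin a.cols)) ?_
  rw [h]
  exact evalMon_zero_of_ne hne

lemma prod_eq_zero_col {Z : ℕ × ℕ → Fin d → R} {a : RawMat d} (ha : a.IsComp)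
    {ι : Fin a.rows → ℕ} {κ : Fin a.cols → ℕ} (t0 : Fin a.cols)
    (h : ∀ r, Z (r, κ t0) = 0) :
    ∏ s : Fin a.rows, ∏ t : Fin a.cols, evalMon (Z (ι s, κ t)) (a.entry s t) = 0 := by
  obtain ⟨s0, hs0, hne⟩ := ha.2 t0 t0.isLt
  refine Finset.prod_eq_zero (Finset.mem_univ (⟨s0, hs0⟩ : Fin a.rows)) ?_
  refine Finset.prod_eq_zero (Finset.mem_univ t0) ?_
  rw [h]
  exact evalMon_zero_of_ne hne

end S6
namespace S6

open TwoParam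

variable {d : ℕ} {R : Type*} [CommRing R]

lemma SSc_eq_sum {Z : ℕ × ℕ → Fin d → R} {N1 N2 : ℕ}
    (hb : ∀ i : ℕ × ℕ, Z i ≠ 0 → i.1 < N1 ∧ i.2 < N2)
    {a : RawMat d} (ha : a.IsComp) :
    SSc Z a = ∑ ι ∈ chainsB a.rows 0 N1, ∑ κ ∈ chainsB a.cols 0 N2,
      ∏ s : Fin a.rows, ∏ t : Fin a.cols, evalMon (Z (ι s, κ t)) (a.entry s t) := by
  have hfac : ∀ (ι : Fin a.rows → ℕ) (κ : Fin a.cols → ℕ),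
      (∏ s : Fin a.rows, ∏ t : Fin a.cols, evalMon (Z (ι s, κ t)) (a.entry s t)) ≠ 0 →
      ∀ (s : Fin a.rows) (t : Fin a.cols), a.entry s t ≠ 0 → Z (ι s, κ t) ≠ 0 := by
    intro ι κ hne s t hst hz
    exact hne (Finset.prod_eq_zero (Finset.mem_univ s)
      (Finset.prod_eq_zero (Finset.mem_univ t) (by rw [hz]; exact evalMon_zero_of_ne hst)))
  have hinner : ∀ ι : Fin a.rows → ℕ,
      (∑ᶠ κ ∈ {g : Fin a.cols → ℕ | StrictMono g},
        ∏ s : Fin a.rows, ∏ t : Fin a.cols, evalMon (Z (ι s, κ t)) (a.entry s t))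
        = ∑ κ ∈ chainsB a.cols 0 N2,
        ∏ s : Fin a.rows, ∏ t : Fin a.cols, evalMon (Z (ι s, κ t)) (a.entry s t) := by
    intro ι
    apply finsum_mem_eq_sum_of_inter_support_eq
    ext κ
    simp only [Set.mem_inter_iff, Set.mem_setOf_eq, Function.mem_support, Finset.coe_sort_coe,
      Finset.mem_coe, mem_chainsB]
    constructor
    · rintro ⟨hmono, hne⟩
      refine ⟨⟨fun t => ⟨Nat.zero_le _, ?_⟩, hmono⟩, hne⟩
      obtain ⟨s0, hs0, hent⟩ := ha.2 t t.isLt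
      exact (hb _ (hfac ι κ hne ⟨s0, hs0⟩ t hent)).2
    · rintro ⟨⟨_, hmono⟩, hne⟩
      exact ⟨hmono, hne⟩
  rw [SSc]
  simp only [hinner]
  apply finsum_mem_eq_sum_of_inter_support_eq
  ext ι
  simp only [Set.mem_inter_iff, Set.mem_setOf_eq, Function.mem_support, Finset.coe_sort_coe,
    Finset.mem_coe, mem_chainsB]
  constructor
  · rintro ⟨hmono, hne⟩
    refine ⟨⟨fun s => ⟨Nat.zero_le _, ?_⟩, hmono⟩, hne⟩
    obtain ⟨κ, _, hκne⟩ := Finset.exists_ne_zero_of_sum_ne_zero hne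
    obtain ⟨t0, ht0, hent⟩ := ha.1 s s.isLt
    exact (hb _ (hfac ι κ hκne s ⟨t0, ht0⟩ hent)).1
  · rintro ⟨⟨_, hmono⟩, hne⟩
    exact ⟨hmono, hne⟩

lemma SSc_box {Z : ℕ × ℕ → Fin d → R} {a : RawMat d} (ha : a.IsComp)
    (hb : ∀ i : ℕ × ℕ, Z i ≠ 0 → i.1 < a.rows ∧ i.2 < a.cols) :
    SSc Z a = ∏ s : Fin a.rows, ∏ t : Fin a.cols, evalMon (Z (s, t)) (a.entry s t) := by
  rw [SSc_eq_sum hb ha, chainsB_self, chainsB_self, Finset.sum_singleton, Finset.sum_singleton]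

lemma SSc_vanish_rows {Z : ℕ × ℕ → Fin d → R} {a : RawMat d} (ha : a.IsComp) {M : ℕ}
    (hb : ∀ i : ℕ × ℕ, Z i ≠ 0 → i.1 < M) (hM : M < a.rows) : SSc Z a = 0 := by
  rw [SSc]
  apply finsum_mem_of_eqOn_zero
  intro ι hι
  apply finsum_mem_of_eqOn_zero
  intro κ _
  show (∏ s : Fin a.rows, ∏ t : Fin a.cols, evalMon (Z (ι s, κ t)) (a.entry s t)) = 0
  have hlast : M ≤ ι ⟨a.rows - 1, by omega⟩ := by
    have := strictMono_le_apply hι ⟨a.rows - 1, by omega⟩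
    simp only at this
    omega
  refine prod_eq_zero_row ha ⟨a.rows - 1, by omega⟩ (fun c => ?_)
  by_contra hc
  exact absurd (hb _ hc) (not_lt.mpr hlast)

lemma SSc_vanish_cols {Z : ℕ × ℕ → Fin d → R} {a : RawMat d} (ha : a.IsComp) {M : ℕ}
    (hb : ∀ i : ℕ × ℕ, Z i ≠ 0 → i.2 < M) (hM : M < a.cols) : SSc Z a = 0 := by
  rw [SSc]
  apply finsum_mem_of_eqOn_zero
  intro ι hι
  apply finsum_mem_of_eqOn_zero
  intro κ hκ
  show (∏ s : Fin a.rows, ∏ t : Fin a.cols, evalMon (Z (ι s, κ t)) (a.entry s t)) = 0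
  have hlast : M ≤ κ ⟨a.cols - 1, by omega⟩ := by
    have := strictMono_le_apply hκ ⟨a.cols - 1, by omega⟩
    simp only at this
    omega
  refine prod_eq_zero_col ha ⟨a.cols - 1, by omega⟩ (fun r => ?_)
  by_contra hc
  exact absurd (hb _ hc) (not_lt.mpr hlast)

end S6
namespace S6

open TwoParam

variable {d : ℕ} {R : Type*} [CommRing R]

/-- One-dimensional chain bijection for zero insertion. -/
lemma sum_chains_insert {m N k : ℕ} (hk : k < N) {G H : (Fin m → ℕ) → R}
    (hdead : ∀ ι ∈ chainsB m 0 (N + 1), (∃ s, ι s = k) → G ι = 0)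
    (hlift : ∀ ι ∈ chainsB m 0 N,
      G (fun s => if ι s < k then ι s else ι s + 1) = H ι) :
    ∑ ι ∈ chainsB m 0 (N + 1), G ι = ∑ ι ∈ chainsB m 0 N, H ι := by
  classical
  rw [← Finset.sum_filter_add_sum_filter_not (chainsB m 0 (N + 1)) (fun ι => ∀ s, ι s ≠ k)]
  have h2 : ∑ ι ∈ (chainsB m 0 (N + 1)).filter (fun ι => ¬ ∀ s, ι s ≠ k), G ι = 0 := by
    apply Finset.sum_eq_zero
    intro ι hι
    rw [Finset.mem_filter] at hι
    push_neg at hι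
    exact hdead ι hι.1 hι.2
  rw [h2, add_zero]
  refine Finset.sum_nbij' (i := fun ι => fun s => if ι s < k then ι s else ι s - 1)
    (j := fun ι => fun s => if ι s < k then ι s else ι s + 1) ?_ ?_ ?_ ?_ ?_
  · intro ι hι
    rw [Finset.mem_filter, mem_chainsB] at hι
    obtain ⟨⟨hbd, hmono⟩, hne⟩ := hι
    rw [mem_chainsB]
    constructor
    · intro s
      have := (hbd s).2
      have := hne s
      refine ⟨Nat.zero_le _, ?_⟩
      try dsimp only
      split_ifs <;> omega
    · intro u v huv
      have h1 := hmono huv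
      have h2 := hne u
      have h3 := hne v
      try dsimp only
      split_ifs <;> omega
  · intro ι hι
    rw [mem_chainsB] at hι
    obtain ⟨hbd, hmono⟩ := hι
    rw [Finset.mem_filter, mem_chainsB]
    refine ⟨⟨fun s => ⟨Nat.zero_le _, ?_⟩, fun u v huv => ?_⟩, fun s => ?_⟩
    · have := (hbd s).2
      try dsimp only
      split_ifs <;> omega
    · have h1 := hmono huv
      try dsimp only
      split_ifs <;> omega
    · try dsimp only
      split_ifs <;> omega
  · intro ι hι
    rw [Finset.mem_filter, mem_chainsB] at hι
    obtain ⟨⟨hbd, hmono⟩, hne⟩ := hι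
    funext s
    have h1 := hne s
    have h2 := (hbd s).2
    try dsimp only
    split_ifs <;> omega
  · intro ι hι
    rw [mem_chainsB] at hι
    funext s
    have h2 := (hι.1 s).2
    try dsimp only
    split_ifs <;> omega
  · intro ι hι
    rw [Finset.mem_filter, mem_chainsB] at hι
    obtain ⟨⟨hbd, hmono⟩, hne⟩ := hι
    have hmem : (fun s => if ι s < k then ι s else ι s - 1) ∈ chainsB m 0 N := by
      rw [mem_chainsB]
      constructor
      · intro s
        have := (hbd s).2
        have := hne s
        refine ⟨Nat.zero_le _, ?_⟩
        try dsimp only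
        split_ifs <;> omega
      · intro u v huv
        have h1 := hmono huv
        have h2 := hne u
        have h3 := hne v
        try dsimp only
        split_ifs <;> omega
    have := hlift _ hmem
    rw [← this]
    congr 1
    funext s
    have h1 := hne s
    have h2 := (hbd s).2
    try dsimp only
    split_ifs <;> omega

lemma zeroIns_apply_zero {V : Type*} [Zero V] (k : ℕ) (Z : ℕ × ℕ → V) (x y : ℕ) :
    zeroIns 0 k Z (x, y) =
      if x < k then Z (x, y) else if x = k then 0 else Z (x - 1, y) := by
  simp [zeroIns, axC, shiftD]

lemma zeroIns_apply_one {V : Type*} [Zero V] (k : ℕ) (Z : ℕ × ℕ → V) (x y : ℕ) :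
    zeroIns 1 k Z (x, y) =
      if y < k then Z (x, y) else if y = k then 0 else Z (x, y - 1) := by
  simp [zeroIns, axC, shiftD]

lemma SSc_zeroIns (Z : ℕ × ℕ → Fin d → R) (hZ : EvZ Z) (ax : Fin 2) (k : ℕ)
    {a : RawMat d} (ha : a.IsComp) : SSc (zeroIns ax k Z) a = SSc Z a := by
  -- get a bound
  obtain ⟨N1, N2, hb⟩ : ∃ N1 N2, (∀ i : ℕ × ℕ, Z i ≠ 0 → i.1 < N1 ∧ i.2 < N2) ∧
      k < N1 ∧ k < N2 := by
    refine ⟨max ((hZ.toFinset.sup fun i => i.1) + 1) (k + 1),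
      max ((hZ.toFinset.sup fun i => i.2) + 1) (k + 1), fun i hi => ?_, by omega, by omega⟩
    have hmem : i ∈ hZ.toFinset := (Set.Finite.mem_toFinset hZ).mpr hi
    have h1 : i.1 ≤ hZ.toFinset.sup (fun i => i.1) := Finset.le_sup hmem
    have h2 : i.2 ≤ hZ.toFinset.sup (fun i => i.2) := Finset.le_sup hmem
    exact ⟨lt_max_of_lt_left (by omega), lt_max_of_lt_left (by omega)⟩
  obtain ⟨hb, hk1, hk2⟩ := hb
  fin_cases ax
  · -- axis 0 : rows
    show SSc (zeroIns 0 k Z) a = SSc Z a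
    have hb' : ∀ i : ℕ × ℕ, zeroIns 0 k Z i ≠ 0 → i.1 < N1 + 1 ∧ i.2 < N2 := by
      rintro ⟨x, y⟩ hi
      rw [zeroIns_apply_zero] at hi
      split_ifs at hi with h1 h2
      · have := hb _ hi; simp at this ⊢; omega
      · exact absurd rfl hi
      · have := hb _ hi; simp at this ⊢; omega
    rw [SSc_eq_sum hb' ha, SSc_eq_sum hb ha]
    refine sum_chains_insert hk1 ?_ ?_
    · intro ι hι ⟨s0, hs0⟩
      apply Finset.sum_eq_zero
      intro κ _
      refine prod_eq_zero_row ha s0 (fun c => ?_)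
      rw [hs0, zeroIns_apply_zero]
      simp
    · intro ι hι
      apply Finset.sum_congr rfl
      intro κ _
      apply Finset.prod_congr rfl
      intro s _
      apply Finset.prod_congr rfl
      intro t _
      try dsimp only
      congr 1
      by_cases h : ι s < k
      · rw [if_pos h, zeroIns_apply_zero, if_pos h]
      · rw [if_neg h, zeroIns_apply_zero, if_neg (by omega), if_neg (by omega)]
        simp
  · -- axis 1 : cols
    show SSc (zeroIns 1 k Z) a = SSc Z a
    have hb' : ∀ i : ℕ × ℕ, zeroIns 1 k Z i ≠ 0 → i.1 < N1 ∧ i.2 < N2 + 1 := by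
      rintro ⟨x, y⟩ hi
      rw [zeroIns_apply_one] at hi
      split_ifs at hi with h1 h2
      · have := hb _ hi; simp at this ⊢; omega
      · exact absurd rfl hi
      · have := hb _ hi; simp at this ⊢; omega
    rw [SSc_eq_sum hb' ha, SSc_eq_sum hb ha]
    apply Finset.sum_congr rfl
    intro ι _
    refine sum_chains_insert hk2 ?_ ?_
    · intro κ hκ ⟨t0, ht0⟩
      refine prod_eq_zero_col ha t0 (fun r => ?_)
      rw [ht0, zeroIns_apply_one]
      simp
    · intro κ hκ
      apply Finset.prod_congr rfl
      intro s _
      apply Finset.prod_congr rfl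
      intro t _
      try dsimp only
      congr 1
      by_cases h : κ t < k
      · rw [if_pos h, zeroIns_apply_one, if_pos h]
      · rw [if_neg h, zeroIns_apply_one, if_neg (by omega), if_neg (by omega)]
        simp

end S6
namespace S6

open TwoParam

variable {V : Type*} [Zero V]

lemma zeroIns_liftIdx (ax : Fin 2) (k : ℕ) (Z : ℕ × ℕ → V) (i : ℕ × ℕ) :
    zeroIns ax k Z (liftIdx ax k i) = Z i := by
  obtain ⟨x, y⟩ := i
  fin_cases ax
  · show zeroIns 0 k Z (liftIdx 0 k (x, y)) = Z (x, y)
    by_cases hx : x < k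
    · rw [liftIdx, if_pos rfl, if_pos hx, zeroIns_apply_zero, if_pos hx]
    · rw [liftIdx, if_pos rfl, if_neg hx]
      rw [show ((x, y).1 + 1, (x, y).2) = (x + 1, y) from rfl, zeroIns_apply_zero,
        if_neg (by omega), if_neg (by omega)]
      simp
  · show zeroIns 1 k Z (liftIdx 1 k (x, y)) = Z (x, y)
    by_cases hy : y < k
    · rw [liftIdx, if_neg (by decide), if_pos hy, zeroIns_apply_one, if_pos hy]
    · rw [liftIdx, if_neg (by decide), if_neg hy]
      rw [show ((x, y).1, (x, y).2 + 1) = (x, y + 1) from rfl, zeroIns_apply_one,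
        if_neg (by omega), if_neg (by omega)]
      simp

lemma liftIdx_injective (ax : Fin 2) (k : ℕ) : Function.Injective (liftIdx ax k) := by
  rintro ⟨x, y⟩ ⟨x', y'⟩ h
  fin_cases ax <;>
    simp only [liftIdx, Fin.isValue] at h <;>
    split_ifs at h <;>
    simp_all [Prod.ext_iff] <;> omega

lemma support_zeroIns_subset (ax : Fin 2) (k : ℕ) (Z : ℕ × ℕ → V) :
    Function.support (zeroIns ax k Z) ⊆ liftIdx ax k '' Function.support Z := by
  rintro ⟨x, y⟩ hi
  rw [Function.mem_support] at hi
  fin_cases ax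
  · rw [show ((⟨0, by omega⟩ : Fin 2)) = 0 from rfl] at hi ⊢
    rw [zeroIns_apply_zero] at hi
    split_ifs at hi with h1 h2
    · exact ⟨(x, y), hi, by rw [liftIdx, if_pos rfl, if_pos h1]⟩
    · exact absurd rfl hi
    · refine ⟨(x - 1, y), hi, ?_⟩
      rw [liftIdx, if_pos rfl, if_neg (by simp; omega)]
      simp only
      rw [Prod.ext_iff]
      simp
      omega
  · rw [show ((⟨1, by omega⟩ : Fin 2)) = 1 from rfl] at hi ⊢
    rw [zeroIns_apply_one] at hi
    split_ifs at hi with h1 h2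
    · exact ⟨(x, y), hi, by rw [liftIdx, if_neg (by decide), if_pos h1]⟩
    · exact absurd rfl hi
    · refine ⟨(x, y - 1), hi, ?_⟩
      rw [liftIdx, if_neg (by decide), if_neg (by simp; omega)]
      simp only
      rw [Prod.ext_iff]
      simp
      omega

lemma evZ_zeroIns_iff (ax : Fin 2) (k : ℕ) (Z : ℕ × ℕ → V) :
    EvZ (zeroIns ax k Z) ↔ EvZ Z := by
  constructor
  · intro h
    have hsub : Function.support Z ⊆ liftIdx ax k ⁻¹' Function.support (zeroIns ax k Z) := by
      intro i hi
      rw [Set.mem_preimage, Function.mem_support, zeroIns_liftIdx]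
      exact hi
    exact Set.Finite.subset (Set.Finite.preimage ((liftIdx_injective ax k).injOn) h) hsub
  · intro h
    exact Set.Finite.subset (Set.Finite.image _ h) (support_zeroIns_subset ax k Z)

/-! ### rows/cols of eventually zero data -/

lemma rowsZ_spec {A : ℕ × ℕ → V} (hA : EvZ A) : ∀ i, A i ≠ 0 → i.1 < rowsZ A := by
  have hne : {m : ℕ | ∀ i : ℕ × ℕ, A i ≠ 0 → i.1 < m}.Nonempty := by
    refine ⟨(hA.toFinset.sup fun i => i.1) + 1, fun i hi => ?_⟩
    have hmem : i ∈ hA.toFinset := (Set.Finite.mem_toFinset hA).mpr hi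
    have h1 : i.1 ≤ hA.toFinset.sup (fun i => i.1) := Finset.le_sup hmem
    omega
  exact Nat.sInf_mem hne

lemma colsZ_spec {A : ℕ × ℕ → V} (hA : EvZ A) : ∀ i, A i ≠ 0 → i.2 < colsZ A := by
  have hne : {m : ℕ | ∀ i : ℕ × ℕ, A i ≠ 0 → i.2 < m}.Nonempty := by
    refine ⟨(hA.toFinset.sup fun i => i.2) + 1, fun i hi => ?_⟩
    have hmem : i ∈ hA.toFinset := (Set.Finite.mem_toFinset hA).mpr hi
    have h1 : i.2 ≤ hA.toFinset.sup (fun i => i.2) := Finset.le_sup hmem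
    omega
  exact Nat.sInf_mem hne

lemma rowsZ_le {A : ℕ × ℕ → V} {m : ℕ} (h : ∀ i, A i ≠ 0 → i.1 < m) : rowsZ A ≤ m :=
  Nat.sInf_le h

lemma colsZ_le {A : ℕ × ℕ → V} {m : ℕ} (h : ∀ i, A i ≠ 0 → i.2 < m) : colsZ A ≤ m :=
  Nat.sInf_le h

/-- A reduced (compressed) eventually zero function: no zero row and no zero
column inside its bounding box. -/
def Red (A : ℕ × ℕ → V) : Prop :=
  (∀ r < rowsZ A, ∃ c, A (r, c) ≠ 0) ∧ (∀ c < colsZ A, ∃ r, A (r, c) ≠ 0)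

/-- Every eventually zero function is equivalent to a reduced one. -/
lemma reduce_aux : ∀ (N : ℕ) (A : ℕ × ℕ → V), EvZ A → rowsZ A + colsZ A ≤ N →
    ∃ A', Relation.EqvGen (fun X Y : ℕ × ℕ → V =>
        ∃ (a : Fin 2) (k : ℕ), Y = zeroIns a k X) A A' ∧ EvZ A' ∧ Red A' := by
  intro N
  induction N with
  | zero =>
      intro A hA h
      exact ⟨A, .refl A, hA, fun r hr => by omega, fun c hc => by omega⟩
  | succ N ih =>
      intro A hA hle
      by_cases hred : Red A
      · exact ⟨A, .refl A, hA, hred⟩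
      · rw [Red, not_and_or] at hred
        rcases hred with hrow | hcol
        · push_neg at hrow
          obtain ⟨r, hr, hrow⟩ := hrow
          set B : ℕ × ℕ → V := fun i => if i.1 < r then A i else A (i.1 + 1, i.2) with hB
          have hAB : A = zeroIns 0 r B := by
            funext i
            obtain ⟨x, y⟩ := i
            rw [zeroIns_apply_zero]
            rcases lt_trichotomy x r with h | h | h
            · rw [if_pos h, hB]; simp [h]
            · rw [if_neg (by omega), if_pos h, h]
              exact hrow y
            · rw [if_neg (by omega), if_neg (by omega), hB]
              simp only [if_neg (show ¬ x - 1 < r by omega)]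
              congr 1
              rw [Prod.ext_iff]
              simp
              omega
          have hBZ : EvZ B := by
            have : Function.support B ⊆
                (fun i : ℕ × ℕ => if i.1 < r then i else (i.1 + 1, i.2)) ⁻¹'
                  Function.support A := by
              intro i hi
              rw [Function.mem_support] at hi
              rw [Set.mem_preimage, Function.mem_support]
              rw [hB] at hi
              simp only at hi
              by_cases h : i.1 < r
              · rw [if_pos h] at hi ⊢; exact hi
              · rw [if_neg h] at hi ⊢; exact hi
            refine Set.Finite.subset (Set.Finite.preimage ?_ hA) this
            rintro ⟨x, y⟩ _ ⟨x', y'⟩ _ hij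
            simp only at hij
            split_ifs at hij <;>
              (rw [Prod.mk.injEq] at hij ⊢; omega)
          have h1 : rowsZ B < rowsZ A := by
            have : rowsZ B ≤ rowsZ A - 1 := by
              apply rowsZ_le
              intro i hi
              rw [hB] at hi
              simp only at hi
              by_cases h : i.1 < r
              · omega
              · rw [if_neg h] at hi
                have := rowsZ_spec hA _ hi
                simp at this
                omega
            omega
          have h2 : colsZ B ≤ colsZ A := by
            apply colsZ_le
            intro i hi
            rw [hB] at hi
            simp only at hi
            by_cases h : i.1 < r
            · rw [if_pos h] at hi
              exact colsZ_spec hA _ hi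
            · rw [if_neg h] at hi
              have := colsZ_spec hA _ hi
              simpa using this
          obtain ⟨A', hgen, hA', hred'⟩ := ih B hBZ (by omega)
          exact ⟨A', .trans _ _ _ (.symm _ _ (.rel B A ⟨0, r, hAB⟩)) hgen, hA', hred'⟩
        · push_neg at hcol
          obtain ⟨c, hc, hcol⟩ := hcol
          set B : ℕ × ℕ → V := fun i => if i.2 < c then A i else A (i.1, i.2 + 1) with hB
          have hAB : A = zeroIns 1 c B := by
            funext i
            obtain ⟨x, y⟩ := i
            rw [zeroIns_apply_one]
            rcases lt_trichotomy y c with h | h | h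
            · rw [if_pos h, hB]; simp [h]
            · rw [if_neg (by omega), if_pos h, h]
              exact hcol x
            · rw [if_neg (by omega), if_neg (by omega), hB]
              simp only [if_neg (show ¬ y - 1 < c by omega)]
              congr 1
              rw [Prod.ext_iff]
              simp
              omega
          have hBZ : EvZ B := by
            have : Function.support B ⊆
                (fun i : ℕ × ℕ => if i.2 < c then i else (i.1, i.2 + 1)) ⁻¹'
                  Function.support A := by
              intro i hi
              rw [Function.mem_support] at hi
              rw [Set.mem_preimage, Function.mem_support]
              rw [hB] at hi
              simp only at hi
              by_cases h : i.2 < c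
              · rw [if_pos h] at hi ⊢; exact hi
              · rw [if_neg h] at hi ⊢; exact hi
            refine Set.Finite.subset (Set.Finite.preimage ?_ hA) this
            rintro ⟨x, y⟩ _ ⟨x', y'⟩ _ hij
            simp only at hij
            split_ifs at hij <;>
              (rw [Prod.mk.injEq] at hij ⊢; omega)
          have h1 : colsZ B < colsZ A := by
            have : colsZ B ≤ colsZ A - 1 := by
              apply colsZ_le
              intro i hi
              rw [hB] at hi
              simp only at hi
              by_cases h : i.2 < c
              · omega
              · rw [if_neg h] at hi
                have := colsZ_spec hA _ hi
                simp at this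
                omega
            omega
          have h2 : rowsZ B ≤ rowsZ A := by
            apply rowsZ_le
            intro i hi
            rw [hB] at hi
            simp only at hi
            by_cases h : i.2 < c
            · rw [if_pos h] at hi
              exact rowsZ_spec hA _ hi
            · rw [if_neg h] at hi
              have := rowsZ_spec hA _ hi
              simpa using this
          obtain ⟨A', hgen, hA', hred'⟩ := ih B hBZ (by omega)
          exact ⟨A', .trans _ _ _ (.symm _ _ (.rel B A ⟨1, c, hAB⟩)) hgen, hA', hred'⟩

lemma reduce {A : ℕ × ℕ → V} (hA : EvZ A) :
    ∃ A', Relation.EqvGen (fun X Y : ℕ × ℕ → V =>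
        ∃ (a : Fin 2) (k : ℕ), Y = zeroIns a k X) A A' ∧ EvZ A' ∧ Red A' :=
  reduce_aux (rowsZ A + colsZ A) A hA le_rfl

end S6
namespace S6

open TwoParam

variable {d : ℕ} {R : Type*} [CommRing R]

/-- The base composition attached to a reduced eventually zero `A`. -/
noncomputable def baseMat (A : ℕ × ℕ → Fin d → R) : RawMat d where
  rows := rowsZ A
  cols := colsZ A
  entry := fun s t =>
    if h : s < rowsZ A ∧ t < colsZ A ∧ A (s, t) ≠ 0
    then Finsupp.single (Function.ne_iff.mp h.2.2).choose 1 else 0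
  entry_eq_zero := by
    intro i j hij
    exact dif_neg (by rintro ⟨h1, h2, _⟩; omega)

lemma baseMat_isComp {A : ℕ × ℕ → Fin d → R} (hA : EvZ A) (hrA : Red A) :
    (baseMat A).IsComp := by
  constructor
  · intro s hs
    obtain ⟨c, hc⟩ := hrA.1 s hs
    have hc2 : c < colsZ A := colsZ_spec hA (s, c) hc
    refine ⟨c, hc2, ?_⟩
    show (if h : s < rowsZ A ∧ c < colsZ A ∧ A (s, c) ≠ 0
      then Finsupp.single (Function.ne_iff.mp h.2.2).choose 1 else 0) ≠ 0
    rw [dif_pos ⟨hs, hc2, hc⟩]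
    exact fun hz => one_ne_zero (Finsupp.single_eq_zero.mp hz)
  · intro c hc
    obtain ⟨s, hs⟩ := hrA.2 c hc
    have hs2 : s < rowsZ A := rowsZ_spec hA (s, c) hs
    refine ⟨s, hs2, ?_⟩
    show (if h : s < rowsZ A ∧ c < colsZ A ∧ A (s, c) ≠ 0
      then Finsupp.single (Function.ne_iff.mp h.2.2).choose 1 else 0) ≠ 0
    rw [dif_pos ⟨hs2, hc, hs⟩]
    exact fun hz => one_ne_zero (Finsupp.single_eq_zero.mp hz)

lemma base_prod_ne_zero [IsDomain R] {A : ℕ × ℕ → Fin d → R} :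
    (∏ s : Fin (baseMat A).rows, ∏ t : Fin (baseMat A).cols,
      evalMon (A (s, t)) ((baseMat A).entry s t)) ≠ 0 := by
  rw [Finset.prod_ne_zero_iff]
  intro s _
  rw [Finset.prod_ne_zero_iff]
  intro t _
  show evalMon (A (s, t)) (if h : (s : ℕ) < rowsZ A ∧ (t : ℕ) < colsZ A ∧ A (s, t) ≠ 0
    then Finsupp.single (Function.ne_iff.mp h.2.2).choose 1 else 0) ≠ 0
  by_cases hcond : (s : ℕ) < rowsZ A ∧ (t : ℕ) < colsZ A ∧ A ((s : ℕ), (t : ℕ)) ≠ 0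
  · rw [dif_pos hcond, evalMon_single]
    exact (Function.ne_iff.mp hcond.2.2).choose_spec
  · rw [dif_neg hcond, evalMon_zero_right]
    exact one_ne_zero

/-- Bump one entry of a matrix by one extra generator. -/
noncomputable def bumpMat (a : RawMat d) (s t : ℕ) (j : Fin d) : RawMat d where
  rows := a.rows
  cols := a.cols
  entry := fun x y =>
    if x = s ∧ y = t ∧ s < a.rows ∧ t < a.cols
    then a.entry x y + Finsupp.single j 1 else a.entry x y
  entry_eq_zero := by
    intro x y hxy
    show (if x = s ∧ y = t ∧ s < a.rows ∧ t < a.cols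
      then a.entry x y + Finsupp.single j 1 else a.entry x y) = 0
    rw [if_neg, a.entry_eq_zero _ _ hxy]
    rintro ⟨rfl, rfl, h3, h4⟩
    omega

lemma add_single_ne_zero (m : Md d) (j : Fin d) : m + Finsupp.single j 1 ≠ 0 := by
  intro h
  have h2 := DFunLike.congr_fun h j
  rw [Finsupp.add_apply, Finsupp.single_eq_same, Finsupp.coe_zero, Pi.zero_apply] at h2
  omega

lemma bumpMat_isComp {a : RawMat d} (ha : a.IsComp) (s t : ℕ) (j : Fin d) :
    (bumpMat a s t j).IsComp := by
  constructor
  · intro x hx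
    obtain ⟨y, hy, hne⟩ := ha.1 x hx
    refine ⟨y, hy, ?_⟩
    show (if x = s ∧ y = t ∧ s < a.rows ∧ t < a.cols
      then a.entry x y + Finsupp.single j 1 else a.entry x y) ≠ 0
    split_ifs
    · exact add_single_ne_zero _ _
    · exact hne
  · intro y hy
    obtain ⟨x, hx, hne⟩ := ha.2 y hy
    refine ⟨x, hx, ?_⟩
    show (if x = s ∧ y = t ∧ s < a.rows ∧ t < a.cols
      then a.entry x y + Finsupp.single j 1 else a.entry x y) ≠ 0
    split_ifs
    · exact add_single_ne_zero _ _
    · exact hne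

lemma prod_bump (Z : ℕ × ℕ → Fin d → R) (a : RawMat d) {s t : ℕ}
    (hs : s < a.rows) (ht : t < a.cols) (j : Fin d) :
    (∏ x : Fin a.rows, ∏ y : Fin a.cols, evalMon (Z (x, y)) ((bumpMat a s t j).entry x y))
      = Z (s, t) j * ∏ x : Fin a.rows, ∏ y : Fin a.cols, evalMon (Z (x, y)) (a.entry x y) := by
  have key : ∀ (x : Fin a.rows) (y : Fin a.cols),
      evalMon (Z (x, y)) ((bumpMat a s t j).entry x y) =
        (if x = (⟨s, hs⟩ : Fin a.rows) ∧ y = (⟨t, ht⟩ : Fin a.cols)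
          then Z (s, t) j else 1) * evalMon (Z (x, y)) (a.entry x y) := by
    intro x y
    show evalMon (Z (x, y)) (if (x : ℕ) = s ∧ (y : ℕ) = t ∧ s < a.rows ∧ t < a.cols
      then a.entry x y + Finsupp.single j 1 else a.entry x y) = _
    by_cases hxy : (x : ℕ) = s ∧ (y : ℕ) = t
    · have hx : x = (⟨s, hs⟩ : Fin a.rows) := Fin.ext hxy.1
      have hy : y = (⟨t, ht⟩ : Fin a.cols) := Fin.ext hxy.2
      rw [if_pos ⟨hxy.1, hxy.2, hs, ht⟩, if_pos ⟨hx, hy⟩, evalMon_add, evalMon_single,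
        hxy.1, hxy.2]
      ring
    · rw [if_neg (by tauto), if_neg (by
        rintro ⟨rfl, rfl⟩
        exact hxy ⟨rfl, rfl⟩), one_mul]
  calc (∏ x : Fin a.rows, ∏ y : Fin a.cols, evalMon (Z (x, y)) ((bumpMat a s t j).entry x y))
      = ∏ x : Fin a.rows, ∏ y : Fin a.cols,
          ((if x = (⟨s, hs⟩ : Fin a.rows) ∧ y = (⟨t, ht⟩ : Fin a.cols)
            then Z (s, t) j else 1) * evalMon (Z (x, y)) (a.entry x y)) := by
        exact Finset.prod_congr rfl fun x _ => Finset.prod_congr rfl fun y _ => key x y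
    _ = (∏ x : Fin a.rows, ∏ y : Fin a.cols,
          (if x = (⟨s, hs⟩ : Fin a.rows) ∧ y = (⟨t, ht⟩ : Fin a.cols)
            then Z (s, t) j else 1)) *
        ∏ x : Fin a.rows, ∏ y : Fin a.cols, evalMon (Z (x, y)) (a.entry x y) := by
        rw [← Finset.prod_mul_distrib]
        exact Finset.prod_congr rfl fun x _ => Finset.prod_mul_distrib
    _ = Z (s, t) j * ∏ x : Fin a.rows, ∏ y : Fin a.cols, evalMon (Z (x, y)) (a.entry x y) := by
        congr 1
        have hinner : ∀ x : Fin a.rows,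
            (∏ y : Fin a.cols, (if x = (⟨s, hs⟩ : Fin a.rows) ∧ y = (⟨t, ht⟩ : Fin a.cols)
              then Z (s, t) j else 1)) = if x = (⟨s, hs⟩ : Fin a.rows) then Z (s, t) j else 1 := by
          intro x
          by_cases hx : x = (⟨s, hs⟩ : Fin a.rows)
          · simp [hx]
          · simp [hx]
        rw [Finset.prod_congr rfl fun x _ => hinner x]
        simp

lemma eq_of_red [IsDomain R] {A B : ℕ × ℕ → Fin d → R} (hA : EvZ A) (hB : EvZ B)
    (hrA : Red A) (hrB : Red B)
    (h : ∀ a : RawMat d, a.IsComp → SSc A a = SSc B a) : A = B := by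
  have hboxA : ∀ i : ℕ × ℕ, A i ≠ 0 → i.1 < (baseMat A).rows ∧ i.2 < (baseMat A).cols :=
    fun i hi => ⟨rowsZ_spec hA i hi, colsZ_spec hA i hi⟩
  have hboxB : ∀ i : ℕ × ℕ, B i ≠ 0 → i.1 < (baseMat B).rows ∧ i.2 < (baseMat B).cols :=
    fun i hi => ⟨rowsZ_spec hB i hi, colsZ_spec hB i hi⟩
  have hcA := baseMat_isComp hA hrA
  have hcB := baseMat_isComp hB hrB
  have hSA : SSc A (baseMat A) = ∏ s : Fin (baseMat A).rows, ∏ t : Fin (baseMat A).cols,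
      evalMon (A (s, t)) ((baseMat A).entry s t) := SSc_box hcA hboxA
  have hSB : SSc B (baseMat B) = ∏ s : Fin (baseMat B).rows, ∏ t : Fin (baseMat B).cols,
      evalMon (B (s, t)) ((baseMat B).entry s t) := SSc_box hcB hboxB
  have hPA : SSc A (baseMat A) ≠ 0 := by rw [hSA]; exact base_prod_ne_zero
  have hPB : SSc B (baseMat B) ≠ 0 := by rw [hSB]; exact base_prod_ne_zero
  have hm : rowsZ A = rowsZ B := by
    refine le_antisymm ?_ ?_
    · by_contra hlt
      push_neg at hlt
      have h0 : SSc B (baseMat A) = 0 :=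
        SSc_vanish_rows hcA (fun i hi => rowsZ_spec hB i hi) hlt
      exact hPA (by rw [h _ hcA]; exact h0)
    · by_contra hlt
      push_neg at hlt
      have h0 : SSc A (baseMat B) = 0 :=
        SSc_vanish_rows hcB (fun i hi => rowsZ_spec hA i hi) hlt
      exact hPB (by rw [← h _ hcB]; exact h0)
  have hn : colsZ A = colsZ B := by
    refine le_antisymm ?_ ?_
    · by_contra hlt
      push_neg at hlt
      have h0 : SSc B (baseMat A) = 0 :=
        SSc_vanish_cols hcA (fun i hi => colsZ_spec hB i hi) hlt
      exact hPA (by rw [h _ hcA]; exact h0)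
    · by_contra hlt
      push_neg at hlt
      have h0 : SSc A (baseMat B) = 0 :=
        SSc_vanish_cols hcB (fun i hi => colsZ_spec hA i hi) hlt
      exact hPB (by rw [← h _ hcB]; exact h0)
  -- the sum over the base for B equals the one for A
  have hboxBA : ∀ i : ℕ × ℕ, B i ≠ 0 → i.1 < (baseMat A).rows ∧ i.2 < (baseMat A).cols := by
    intro i hi
    have := hboxB i hi
    show i.1 < rowsZ A ∧ i.2 < colsZ A
    rw [hm, hn]
    exact this
  have hSBA : SSc B (baseMat A) = ∏ s : Fin (baseMat A).rows, ∏ t : Fin (baseMat A).cols,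
      evalMon (B (s, t)) ((baseMat A).entry s t) := SSc_box hcA hboxBA
  have hPeq : (∏ s : Fin (baseMat A).rows, ∏ t : Fin (baseMat A).cols,
      evalMon (B (s, t)) ((baseMat A).entry s t)) =
      ∏ s : Fin (baseMat A).rows, ∏ t : Fin (baseMat A).cols,
      evalMon (A (s, t)) ((baseMat A).entry s t) := by
    rw [← hSBA, ← hSA]
    exact (h _ hcA).symm
  funext i
  by_cases hin : i.1 < rowsZ A ∧ i.2 < colsZ A
  · obtain ⟨h1, h2⟩ := hin
    funext j
    have ha1 : (bumpMat (baseMat A) i.1 i.2 j).IsComp := bumpMat_isComp hcA i.1 i.2 j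
    have e1 : SSc A (bumpMat (baseMat A) i.1 i.2 j) =
        A i j * ∏ s : Fin (baseMat A).rows, ∏ t : Fin (baseMat A).cols,
          evalMon (A (s, t)) ((baseMat A).entry s t) := by
      rw [SSc_box ha1 hboxA]
      exact prod_bump A (baseMat A) h1 h2 j
    have e2 : SSc B (bumpMat (baseMat A) i.1 i.2 j) =
        B i j * ∏ s : Fin (baseMat A).rows, ∏ t : Fin (baseMat A).cols,
          evalMon (A (s, t)) ((baseMat A).entry s t) := by
      rw [← hPeq]
      have hbox' : ∀ i' : ℕ × ℕ, B i' ≠ 0 →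
          i'.1 < (bumpMat (baseMat A) i.1 i.2 j).rows ∧
          i'.2 < (bumpMat (baseMat A) i.1 i.2 j).cols := hboxBA
      rw [SSc_box ha1 hbox']
      exact prod_bump B (baseMat A) h1 h2 j
    have := h _ ha1
    rw [e1, e2] at this
    exact mul_right_cancel₀ (by rw [← hSA]; exact hPA) this
  · have hAi : A i = 0 := by
      by_contra hne
      exact hin ⟨rowsZ_spec hA i hne, colsZ_spec hA i hne⟩
    have hBi : B i = 0 := by
      by_contra hne
      refine hin ⟨?_, ?_⟩
      · rw [hm]; exact rowsZ_spec hB i hne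
      · rw [hn]; exact colsZ_spec hB i hne
    rw [hAi, hBi]

/-- Forward direction packaged with preservation of `EvZ`. -/
lemma eqvgen_forward {A B : ℕ × ℕ → Fin d → R}
    (h : Relation.EqvGen (fun X Y : ℕ × ℕ → Fin d → R =>
      ∃ (a : Fin 2) (k : ℕ), Y = zeroIns a k X) A B) :
    (EvZ A ↔ EvZ B) ∧
      (EvZ A → ∀ a : RawMat d, a.IsComp → SSc A a = SSc B a) := by
  induction h with
  | rel X Y hxy =>
      obtain ⟨ax, k, rfl⟩ := hxy
      exact ⟨(evZ_zeroIns_iff ax k X).symm,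
        fun hX a ha => (SSc_zeroIns X hX ax k ha).symm⟩
  | refl X => exact ⟨Iff.rfl, fun _ _ _ => rfl⟩
  | symm X Y _ ih =>
      exact ⟨ih.1.symm, fun hY a ha => (ih.2 (ih.1.mpr hY) a ha).symm⟩
  | trans X Y Z _ _ ih1 ih2 =>
      exact ⟨ih1.1.trans ih2.1,
        fun hX a ha => (ih1.2 hX a ha).trans (ih2.2 (ih1.1.mp hX) a ha)⟩

end S6
open TwoParam in
/-- the two-parameter sums signature separates exactly the
equivalence classes of eventually zero functions up to zero insertion. -/
theorem statement6 {d : ℕ} {R : Type*} [CommRing R] [IsDomain R]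
    (A B : ℕ × ℕ → Fin d → R) (hA : EvZ A) (hB : EvZ B) :
    Relation.EqvGen
        (fun X Y : ℕ × ℕ → Fin d → R =>
          ∃ (a : Fin 2) (k : ℕ), Y = zeroIns a k X) A B ↔
      ∀ a : RawMat d, a.IsComp → SSc A a = SSc B a := by
  constructor
  · intro hgen a ha
    exact (S6.eqvgen_forward hgen).2 hA a ha
  · intro h
    obtain ⟨A', gA, hA', redA⟩ := S6.reduce hA
    obtain ⟨B', gB, hB', redB⟩ := S6.reduce hB
    have hAA' := (S6.eqvgen_forward gA).2 hA
    have hBB' := (S6.eqvgen_forward gB).2 hB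
    have hab : A' = B' := S6.eq_of_red hA' hB' redA redB
      (fun a ha => by rw [← hAA' a ha, h a ha, hBB' a ha])
    refine Relation.EqvGen.trans _ _ _ gA ?_
    rw [hab]
    exact Relation.EqvGen.symm _ _ gB
end

section
/- For all axes a ∈ {1,2} and all k, j ∈ ℕ: (i) the warping operator Warp_{a,k} : evC → evC is an injective R-module endomorphism; (ii) Warp_{1,k} ∘ Warp_{2,j} = Warp_{2,j} ∘ Warp_{1,k}; (iii) if k > j then Warp_{a,k} ∘ Warp_{a,j} = Warp_{a,j} ∘ Warp_{a,k−1}. -/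
open scoped Classical

open TwoParam in
/-- warping operators are injective module endomorphisms of
`evC` and satisfy the stated commutation relations. -/
theorem statement7 {d : ℕ} {R : Type*} [CommRing R] [IsDomain R] :
    (∀ (a : Fin 2) (k : ℕ),
      (∀ X : ℕ × ℕ → Fin d → R, EvC X → EvC (warp a k X)) ∧
      (∀ X Y : ℕ × ℕ → Fin d → R, EvC X → EvC Y →
        warp a k (X + Y) = warp a k X + warp a k Y) ∧
      (∀ (c : R) (X : ℕ × ℕ → Fin d → R), EvC X →
        warp a k (c • X) = c • warp a k X) ∧
      (∀ X Y : ℕ × ℕ → Fin d → R, EvC X → EvC Y →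
        warp a k X = warp a k Y → X = Y)) ∧
    (∀ (k j : ℕ) (X : ℕ × ℕ → Fin d → R), EvC X →
      warp 0 k (warp 1 j X) = warp 1 j (warp 0 k X)) ∧
    (∀ (a : Fin 2) (k j : ℕ), j < k →
      ∀ X : ℕ × ℕ → Fin d → R, EvC X →
        warp a k (warp a j X) = warp a j (warp a (k - 1) X)) := by
  refine ⟨?_, ?_, ?_⟩
  · intro a k
    refine ⟨?_, ?_, ?_, ?_⟩
    · rintro X ⟨n, hn⟩
      refine ⟨(n.1 + 1, n.2 + 1), fun i j hne => ?_⟩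
      fin_cases a <;>
      · simp only [warp, axC, shiftD, if_pos, if_neg, reduceIte] at hne
        split_ifs at hne <;>
        · rcases hn _ _ hne with h | h
          · left; simp at h ⊢; omega
          · right; simp at h ⊢; omega
    · intro X Y _ _
      funext i
      simp only [warp, Pi.add_apply]
      split_ifs <;> rfl
    · intro c X _
      funext i
      simp only [warp, Pi.smul_apply]
      split_ifs <;> rfl
    · intro X Y _ _ h
      funext i
      by_cases hc : axC a i ≤ k
      · have := congrFun h i
        simpa [warp, hc] using this
      · fin_cases a
        · have := congrFun h (i.1 + 1, i.2)
          simp only [warp, axC, shiftD, Fin.mk_zero, Fin.mk_one, reduceIte] at this ⊢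
          simp only [axC, Fin.mk_zero, reduceIte] at hc
          rw [if_neg (by simpa using by omega : ¬ i.1 + 1 ≤ k),
              if_neg (by simpa using by omega : ¬ i.1 + 1 ≤ k)] at this
          simpa using this
        · have := congrFun h (i.1, i.2 + 1)
          simp only [warp, axC, shiftD, Fin.mk_zero, Fin.mk_one, one_ne_zero, reduceIte] at this ⊢
          simp only [axC, Fin.mk_one, one_ne_zero, reduceIte] at hc
          rw [if_neg (by simpa using by omega : ¬ i.2 + 1 ≤ k),
              if_neg (by simpa using by omega : ¬ i.2 + 1 ≤ k)] at this
          simpa using this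
  · intro k j X _
    funext i
    simp only [warp, axC, shiftD, reduceIte]
    split_ifs <;> first | rfl | omega
  · intro a k j hjk X _
    funext i
    fin_cases a <;>
    · simp only [warp, axC, shiftD, reduceIte]
      split_ifs <;> first | rfl | omega
end

section
/- For all axes a ∈ {1,2} and all k ∈ ℕ: δ ∘ Warp_{a,k} = Zero_{a,k} ∘ δ as maps evC → evZ, and ς ∘ Zero_{a,k} = Warp_{a,k} ∘ ς as maps evZ → evC. -/
open scoped Classical

namespace TwoParam

lemma sig0 {V : Type*} [AddCommMonoid V] (k : ℕ) (Z : ℕ × ℕ → V) :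
    sigmaOp (zeroIns 0 k Z) = warp 0 k (sigmaOp Z) := by
  funext i
  obtain ⟨i1, i2⟩ := i
  have hz : ∀ p : ℕ × ℕ, zeroIns 0 k Z p =
      (if p.1 < k then Z p else if p.1 = k then 0 else Z (p.1 - 1, p.2)) := by
    intro p; simp [zeroIns, axC, shiftD]
  by_cases h : i1 ≤ k
  · have hw : warp 0 k (sigmaOp Z) (i1, i2) = sigmaOp Z (i1, i2) := by
      simp [warp, axC, h]
    rw [hw]
    show ∑ᶠ p ∈ {p : ℕ × ℕ | i1 ≤ p.1 ∧ i2 ≤ p.2}, zeroIns 0 k Z p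
       = ∑ᶠ p ∈ {p : ℕ × ℕ | i1 ≤ p.1 ∧ i2 ≤ p.2}, Z p
    rw [← finsum_mem_inter_support (zeroIns 0 k Z),
      ← finsum_mem_inter_support Z]
    apply finsum_mem_eq_of_bijOn
      (fun p : ℕ × ℕ => (if p.1 < k then p.1 else p.1 - 1, p.2))
    · refine ⟨?_, ?_, ?_⟩
      · rintro ⟨p1, p2⟩ hp
        simp only [Set.mem_inter_iff, Set.mem_setOf_eq,
          Function.mem_support, hz] at hp ⊢
        obtain ⟨⟨h1, h2⟩, h3⟩ := hp
        split_ifs at h3 ⊢ with hlt heq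
        · exact ⟨⟨h1, h2⟩, h3⟩
        · exact absurd rfl h3
        · exact ⟨⟨by omega, h2⟩, h3⟩
      · rintro ⟨p1, p2⟩ hp ⟨q1, q2⟩ hq heq
        simp only [Set.mem_inter_iff, Set.mem_setOf_eq,
          Function.mem_support, hz] at hp hq
        obtain ⟨-, h3⟩ := hp
        obtain ⟨-, h4⟩ := hq
        have hpk : p1 ≠ k := by rintro rfl; simp at h3
        have hqk : q1 ≠ k := by rintro rfl; simp at h4
        simp only [Prod.mk.injEq] at heq ⊢
        obtain ⟨e1, e2⟩ := heq
        refine ⟨?_, e2⟩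
        split_ifs at e1 <;> omega
      · rintro ⟨q1, q2⟩ hq
        simp only [Set.mem_inter_iff, Set.mem_setOf_eq,
          Function.mem_support] at hq
        obtain ⟨⟨h1, h2⟩, h3⟩ := hq
        by_cases hk : q1 < k
        · refine ⟨(q1, q2), ⟨⟨h1, h2⟩, ?_⟩, ?_⟩
          · simp only [Function.mem_support, hz]
            rw [if_pos hk]; exact h3
          · simp only [if_pos hk]
        · refine ⟨(q1 + 1, q2), ⟨⟨by omega, h2⟩, ?_⟩, ?_⟩
          · simp only [Function.mem_support, hz]
            rw [if_neg (by omega : ¬ (q1 + 1, q2).1 < k),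
              if_neg (by omega : ¬ (q1 + 1, q2).1 = k)]
            simpa using h3
          · simp only [if_neg (by omega : ¬ (q1 + 1, q2).1 < k)]
            simp
    · rintro ⟨p1, p2⟩ hp
      simp only [Set.mem_inter_iff, Set.mem_setOf_eq,
        Function.mem_support, hz] at hp
      obtain ⟨-, h3⟩ := hp
      simp only [hz]
      split_ifs at h3 ⊢ with hlt heq
      · rfl
      · exact absurd rfl h3
      · rfl
  · have hw : warp 0 k (sigmaOp Z) (i1, i2) = sigmaOp Z (i1 - 1, i2) := by
      simp [warp, axC, shiftD, h]
    rw [hw]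
    show ∑ᶠ p ∈ {p : ℕ × ℕ | i1 ≤ p.1 ∧ i2 ≤ p.2}, zeroIns 0 k Z p
       = ∑ᶠ p ∈ {p : ℕ × ℕ | i1 - 1 ≤ p.1 ∧ i2 ≤ p.2}, Z p
    apply finsum_mem_eq_of_bijOn (fun p : ℕ × ℕ => (p.1 - 1, p.2))
    · refine ⟨?_, ?_, ?_⟩
      · rintro ⟨p1, p2⟩ ⟨h1, h2⟩
        show i1 - 1 ≤ p1 - 1 ∧ i2 ≤ p2
        exact ⟨by omega, h2⟩
      · rintro ⟨p1, p2⟩ ⟨h1, h2⟩ ⟨q1, q2⟩ ⟨h3, h4⟩ heq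
        simp only [Prod.mk.injEq] at heq ⊢
        exact ⟨by omega, heq.2⟩
      · rintro ⟨q1, q2⟩ ⟨h1, h2⟩
        refine ⟨(q1 + 1, q2), ⟨by omega, h2⟩, by simp⟩
    · rintro ⟨p1, p2⟩ ⟨h1, h2⟩
      rw [hz]
      rw [if_neg (by omega : ¬ (p1, p2).1 < k),
        if_neg (by omega : ¬ (p1, p2).1 = k)]

lemma sig1 {V : Type*} [AddCommMonoid V] (k : ℕ) (Z : ℕ × ℕ → V) :
    sigmaOp (zeroIns 1 k Z) = warp 1 k (sigmaOp Z) := by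
  funext i
  obtain ⟨i1, i2⟩ := i
  have hz : ∀ p : ℕ × ℕ, zeroIns 1 k Z p =
      (if p.2 < k then Z p else if p.2 = k then 0 else Z (p.1, p.2 - 1)) := by
    intro p; simp [zeroIns, axC, shiftD]
  by_cases h : i2 ≤ k
  · have hw : warp 1 k (sigmaOp Z) (i1, i2) = sigmaOp Z (i1, i2) := by
      simp [warp, axC, h]
    rw [hw]
    show ∑ᶠ p ∈ {p : ℕ × ℕ | i1 ≤ p.1 ∧ i2 ≤ p.2}, zeroIns 1 k Z p
       = ∑ᶠ p ∈ {p : ℕ × ℕ | i1 ≤ p.1 ∧ i2 ≤ p.2}, Z p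
    rw [← finsum_mem_inter_support (zeroIns 1 k Z),
      ← finsum_mem_inter_support Z]
    apply finsum_mem_eq_of_bijOn
      (fun p : ℕ × ℕ => (p.1, if p.2 < k then p.2 else p.2 - 1))
    · refine ⟨?_, ?_, ?_⟩
      · rintro ⟨p1, p2⟩ hp
        simp only [Set.mem_inter_iff, Set.mem_setOf_eq,
          Function.mem_support, hz] at hp ⊢
        obtain ⟨⟨h1, h2⟩, h3⟩ := hp
        split_ifs at h3 ⊢ with hlt heq
        · exact ⟨⟨h1, h2⟩, h3⟩
        · exact absurd rfl h3
        · exact ⟨⟨h1, by omega⟩, h3⟩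
      · rintro ⟨p1, p2⟩ hp ⟨q1, q2⟩ hq heq
        simp only [Set.mem_inter_iff, Set.mem_setOf_eq,
          Function.mem_support, hz] at hp hq
        obtain ⟨-, h3⟩ := hp
        obtain ⟨-, h4⟩ := hq
        have hpk : p2 ≠ k := by rintro rfl; simp at h3
        have hqk : q2 ≠ k := by rintro rfl; simp at h4
        simp only [Prod.mk.injEq] at heq ⊢
        obtain ⟨e1, e2⟩ := heq
        refine ⟨e1, ?_⟩
        split_ifs at e2 <;> omega
      · rintro ⟨q1, q2⟩ hq
        simp only [Set.mem_inter_iff, Set.mem_setOf_eq,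
          Function.mem_support] at hq
        obtain ⟨⟨h1, h2⟩, h3⟩ := hq
        by_cases hk : q2 < k
        · refine ⟨(q1, q2), ⟨⟨h1, h2⟩, ?_⟩, ?_⟩
          · simp only [Function.mem_support, hz]
            rw [if_pos hk]; exact h3
          · simp only [if_pos hk]
        · refine ⟨(q1, q2 + 1), ⟨⟨h1, by omega⟩, ?_⟩, ?_⟩
          · simp only [Function.mem_support, hz]
            rw [if_neg (by omega : ¬ (q1, q2 + 1).2 < k),
              if_neg (by omega : ¬ (q1, q2 + 1).2 = k)]
            simpa using h3
          · simp only [if_neg (by omega : ¬ (q1, q2 + 1).2 < k)]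
            simp
    · rintro ⟨p1, p2⟩ hp
      simp only [Set.mem_inter_iff, Set.mem_setOf_eq,
        Function.mem_support, hz] at hp
      obtain ⟨-, h3⟩ := hp
      simp only [hz]
      split_ifs at h3 ⊢ with hlt heq
      · rfl
      · exact absurd rfl h3
      · rfl
  · have hw : warp 1 k (sigmaOp Z) (i1, i2) = sigmaOp Z (i1, i2 - 1) := by
      simp [warp, axC, shiftD, h]
    rw [hw]
    show ∑ᶠ p ∈ {p : ℕ × ℕ | i1 ≤ p.1 ∧ i2 ≤ p.2}, zeroIns 1 k Z p
       = ∑ᶠ p ∈ {p : ℕ × ℕ | i1 ≤ p.1 ∧ i2 - 1 ≤ p.2}, Z p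
    apply finsum_mem_eq_of_bijOn (fun p : ℕ × ℕ => (p.1, p.2 - 1))
    · refine ⟨?_, ?_, ?_⟩
      · rintro ⟨p1, p2⟩ ⟨h1, h2⟩
        show i1 ≤ p1 ∧ i2 - 1 ≤ p2 - 1
        exact ⟨h1, by omega⟩
      · rintro ⟨p1, p2⟩ ⟨h1, h2⟩ ⟨q1, q2⟩ ⟨h3, h4⟩ heq
        simp only [Prod.mk.injEq] at heq ⊢
        exact ⟨heq.1, by omega⟩
      · rintro ⟨q1, q2⟩ ⟨h1, h2⟩
        refine ⟨(q1, q2 + 1), ⟨h1, by omega⟩, by simp⟩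
    · rintro ⟨p1, p2⟩ ⟨h1, h2⟩
      rw [hz]
      rw [if_neg (by omega : ¬ (p1, p2).2 < k),
        if_neg (by omega : ¬ (p1, p2).2 = k)]

end TwoParam


open TwoParam in
/-- `δ ∘ Warp_{a,k} = Zero_{a,k} ∘ δ` on `evC` and
`ς ∘ Zero_{a,k} = Warp_{a,k} ∘ ς` on `evZ`. -/
theorem statement9 {d : ℕ} {R : Type*} [CommRing R] [IsDomain R] :
    (∀ (a : Fin 2) (k : ℕ) (X : ℕ × ℕ → Fin d → R), EvC X →
      diffOp (warp a k X) = zeroIns a k (diffOp X)) ∧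
    (∀ (a : Fin 2) (k : ℕ) (Z : ℕ × ℕ → Fin d → R), EvZ Z →
      sigmaOp (zeroIns a k Z) = warp a k (sigmaOp Z)) := by
  constructor
  · intro a k X _
    funext i
    obtain ⟨i1, i2⟩ := i
    fin_cases a
    · simp only [Fin.zero_eta]
      rcases Nat.lt_trichotomy i1 k with h | h | h
      · simp [diffOp, warp, zeroIns, axC, shiftD, h, show i1 + 1 ≤ k by omega,
          show i1 ≤ k by omega]
      · subst h
        simp only [diffOp, warp, zeroIns, axC, shiftD, if_pos rfl,
          show ¬ i1 + 1 ≤ i1 by omega, if_neg, if_true, le_refl,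
          show ¬ i1 < i1 by omega, ite_false, ite_true, Nat.add_sub_cancel]
        abel
      · simp only [diffOp, warp, zeroIns, axC, shiftD, if_pos rfl,
          show ¬ i1 + 1 ≤ k by omega, show ¬ i1 ≤ k by omega,
          show ¬ i1 < k by omega, show i1 ≠ k by omega,
          ite_false, ite_true, Nat.add_sub_cancel,
          show i1 - 1 + 1 = i1 by omega]
    · simp only [Fin.mk_one]
      rcases Nat.lt_trichotomy i2 k with h | h | h
      · simp [diffOp, warp, zeroIns, axC, shiftD, h, show i2 + 1 ≤ k by omega,
          show i2 ≤ k by omega]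
      · subst h
        simp only [diffOp, warp, zeroIns, axC, shiftD,
          show (1 : Fin 2) ≠ 0 by decide,
          show ¬ i2 + 1 ≤ i2 by omega, if_neg, if_true, le_refl,
          show ¬ i2 < i2 by omega, ite_false, ite_true, Nat.add_sub_cancel]
        abel
      · simp only [diffOp, warp, zeroIns, axC, shiftD,
          show (1 : Fin 2) ≠ 0 by decide,
          show ¬ i2 + 1 ≤ k by omega, show ¬ i2 ≤ k by omega,
          show ¬ i2 < k by omega, show i2 ≠ k by omega,
          ite_false, ite_true, Nat.add_sub_cancel,
          show i2 - 1 + 1 = i2 by omega]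
  · intro a k Z _
    funext i
    fin_cases a
    · simp only [Fin.zero_eta]
      exact congrFun (TwoParam.sig0 k Z) i
    · simp only [Fin.mk_one]
      exact congrFun (TwoParam.sig1 k Z) i
end

section
/- For every matrix composition a over M_d, define Ψ_a : evC → R by Ψ_a(X) := ⟨SS(δX), a⟩. Then Ψ_a is invariant modulo constants and invariant to warping in both directions independently: Ψ_a(X + C) = Ψ_a(X) for every X ∈ evC and every constant function C : ℕ×ℕ → R^d, and Ψ_a(Warp_{b,k}(X)) = Ψ_a(X) for all X ∈ evC, b ∈ {1,2}, k ∈ ℕ. -/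
open scoped Classical

namespace TwoParam

section Aux

variable {d : ℕ} {R : Type*} [CommRing R]

/-- Skip map: the order embedding of `ℕ` avoiding `k`. -/
def skipF (k n : ℕ) : ℕ := if n < k then n else n + 1

lemma skipF_strictMono (k : ℕ) : StrictMono (skipF k) := by
  intro x y h; unfold skipF; split_ifs <;> omega

lemma skipF_ne (k n : ℕ) : skipF k n ≠ k := by unfold skipF; split_ifs <;> omega

/-- Un-skip map, inverse of `skipF` on `{n | n ≠ k}`. -/
def unskipF (k n : ℕ) : ℕ := if n < k then n else n - 1

lemma skipF_unskipF {k n : ℕ} (h : n ≠ k) : skipF k (unskipF k n) = n := by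
  unfold skipF unskipF; split_ifs <;> omega

lemma unskipF_strictMono {k x y : ℕ} (hx : x ≠ k) (hy : y ≠ k) (h : x < y) :
    unskipF k x < unskipF k y := by
  unfold unskipF; split_ifs <;> omega

/-- Generic one-axis skipping principle for sums over strictly monotone chains. -/
theorem finsum_chains_skip {M : Type*} [AddCommMonoid M] (k m : ℕ)
    (f g : (Fin m → ℕ) → M)
    (h0 : ∀ ι : Fin m → ℕ, StrictMono ι → (∃ s, ι s = k) → f ι = 0)
    (hc : ∀ ι : Fin m → ℕ, StrictMono ι → f (skipF k ∘ ι) = g ι) :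
    ∑ᶠ ι ∈ {ι : Fin m → ℕ | StrictMono ι}, f ι
      = ∑ᶠ ι ∈ {ι : Fin m → ℕ | StrictMono ι}, g ι := by
  have h1 : ∑ᶠ ι ∈ {ι : Fin m → ℕ | StrictMono ι}, f ι
      = ∑ᶠ ι ∈ {ι : Fin m → ℕ | StrictMono ι ∧ ∀ s, ι s ≠ k}, f ι := by
    apply finsum_mem_inter_support_eq'
    intro ι hι
    simp only [Set.mem_setOf_eq]
    constructor
    · intro hs
      refine ⟨hs, fun s hsk => ?_⟩
      exact hι (h0 ι hs ⟨s, hsk⟩)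
    · exact fun h => h.1
  rw [h1]
  refine (finsum_mem_eq_of_bijOn (fun ι => skipF k ∘ ι) ⟨?_, ?_, ?_⟩
    (fun ι hι => (hc ι hι).symm)).symm
  · intro ι hι
    exact ⟨(skipF_strictMono k).comp hι, fun s => skipF_ne k _⟩
  · intro ι _ ι' _ h
    funext s
    exact (skipF_strictMono k).injective (congrFun h s)
  · rintro ι ⟨hι, hk⟩
    refine ⟨unskipF k ∘ ι, ?_, ?_⟩
    · intro x y hxy
      exact unskipF_strictMono (hk x) (hk y) (hι hxy)
    · funext s
      exact skipF_unskipF (hk s)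

lemma evalMon_zero {m : Md d} (hm : m ≠ 0) : evalMon (0 : Fin d → R) m = 0 := by
  obtain ⟨j, hj⟩ := Finsupp.support_nonempty_iff.2 hm
  refine Finset.prod_eq_zero hj ?_
  simp only [Pi.zero_apply]
  exact zero_pow (Finsupp.mem_support_iff.1 hj)

lemma zeroIns_fst_skip {V : Type*} [Zero V] (k : ℕ) (Z : ℕ × ℕ → V) (n j : ℕ) :
    zeroIns 0 k Z (skipF k n, j) = Z (n, j) := by
  unfold zeroIns skipF axC shiftD
  by_cases h : n < k <;> simp [h] <;> split_ifs <;> first | rfl | omega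

lemma zeroIns_snd_skip {V : Type*} [Zero V] (k : ℕ) (Z : ℕ × ℕ → V) (i n : ℕ) :
    zeroIns 1 k Z (i, skipF k n) = Z (i, n) := by
  unfold zeroIns skipF axC shiftD
  by_cases h : n < k <;> simp [h] <;> split_ifs <;> first | rfl | omega

lemma zeroIns_fst_at {V : Type*} [Zero V] (k : ℕ) (Z : ℕ × ℕ → V) (j : ℕ) :
    zeroIns 0 k Z (k, j) = 0 := by
  unfold zeroIns axC; simp

lemma zeroIns_snd_at {V : Type*} [Zero V] (k : ℕ) (Z : ℕ × ℕ → V) (i : ℕ) :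
    zeroIns 1 k Z (i, k) = 0 := by
  unfold zeroIns axC; simp

/-- Invariance of the signature under zero insertion along either axis. -/
theorem SSc_zeroIns (a : RawMat d) (ha : a.IsComp)
    (Z : ℕ × ℕ → Fin d → R) (b : Fin 2) (k : ℕ) :
    SSc (zeroIns b k Z) a = SSc Z a := by
  obtain rfl | rfl : b = 0 ∨ b = 1 := by omega
  · -- rows
    unfold SSc
    apply finsum_chains_skip k a.rows
    · intro ι hι ⟨s, hs⟩
      obtain ⟨t, ht, hat⟩ := ha.1 s s.isLt
      apply finsum_mem_eq_zero_of_forall_eq_zero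
      intro κ _
      refine Finset.prod_eq_zero (Finset.mem_univ s) ?_
      refine Finset.prod_eq_zero (Finset.mem_univ ⟨t, ht⟩) ?_
      rw [hs, zeroIns_fst_at]
      exact evalMon_zero hat
    · intro ι hι
      apply finsum_mem_congr rfl
      intro κ _
      refine Finset.prod_congr rfl fun s _ => Finset.prod_congr rfl fun t _ => ?_
      rw [Function.comp_apply, zeroIns_fst_skip]
  · -- columns
    unfold SSc
    apply finsum_mem_congr rfl
    intro ι _
    apply finsum_chains_skip k a.cols
    · intro κ hκ ⟨t, ht⟩
      obtain ⟨s, hsr, has⟩ := ha.2 t t.isLt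
      refine Finset.prod_eq_zero (Finset.mem_univ ⟨s, hsr⟩) ?_
      refine Finset.prod_eq_zero (Finset.mem_univ t) ?_
      rw [ht, zeroIns_snd_at]
      exact evalMon_zero has
    · intro κ hκ
      refine Finset.prod_congr rfl fun s _ => Finset.prod_congr rfl fun t _ => ?_
      rw [Function.comp_apply, zeroIns_snd_skip]

/-- `δ ∘ Warp_{b,k} = zeroIns_{b,k} ∘ δ`. -/
theorem diffOp_warp {V : Type*} [AddCommGroup V] (b : Fin 2) (k : ℕ)
    (X : ℕ × ℕ → V) : diffOp (warp b k X) = zeroIns b k (diffOp X) := by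
  obtain rfl | rfl : b = 0 ∨ b = 1 := by omega
  · funext p
    obtain ⟨i, j⟩ := p
    have hw : ∀ p q : ℕ, warp 0 k X (p, q)
        = if p ≤ k then X (p, q) else X (p - 1, q) := by
      intro p q; simp [warp, axC, shiftD]
    have hz : zeroIns 0 k (diffOp X) (i, j)
        = if i < k then diffOp X (i, j)
          else if i = k then 0 else diffOp X (i - 1, j) := by
      simp [zeroIns, axC, shiftD]
    show warp 0 k X (i + 1, j + 1) - warp 0 k X (i + 1, j)
        - warp 0 k X (i, j + 1) + warp 0 k X (i, j) = _
    rw [hz, hw, hw, hw, hw]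
    rcases lt_trichotomy i k with h | h | h
    · split_ifs <;> first | rfl | (exfalso; omega)
    · subst h
      split_ifs <;>
        first
          | (exfalso; omega)
          | (simp only [Nat.add_sub_cancel]; abel)
    · split_ifs <;>
        first
          | (exfalso; omega)
          | (simp only [diffOp, Nat.add_sub_cancel,
               show i - 1 + 1 = i from by omega]; try abel)
  · funext p
    obtain ⟨i, j⟩ := p
    have hw : ∀ p q : ℕ, warp 1 k X (p, q)
        = if q ≤ k then X (p, q) else X (p, q - 1) := by
      intro p q; simp [warp, axC, shiftD]
    have hz : zeroIns 1 k (diffOp X) (i, j)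
        = if j < k then diffOp X (i, j)
          else if j = k then 0 else diffOp X (i, j - 1) := by
      simp [zeroIns, axC, shiftD]
    show warp 1 k X (i + 1, j + 1) - warp 1 k X (i + 1, j)
        - warp 1 k X (i, j + 1) + warp 1 k X (i, j) = _
    rw [hz, hw, hw, hw, hw]
    rcases lt_trichotomy j k with h | h | h
    · split_ifs <;> first | rfl | (exfalso; omega)
    · subst h
      split_ifs <;>
        first
          | (exfalso; omega)
          | (simp only [Nat.add_sub_cancel]; abel)
    · split_ifs <;>
        first
          | (exfalso; omega)
          | (simp only [diffOp, Nat.add_sub_cancel,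
               show j - 1 + 1 = j from by omega]; try abel)

theorem diffOp_add_const {V : Type*} [AddCommGroup V] (X : ℕ × ℕ → V) (c : V) :
    diffOp (X + fun _ => c) = diffOp X := by
  funext i
  simp only [diffOp, Pi.add_apply]
  abel

end Aux

end TwoParam

open TwoParam in
/-- the invariants `Ψ_a = ⟨SS(δ ·), a⟩` are invariant modulo
constants and under warping in both directions independently. -/
theorem statement10 {d : ℕ} {R : Type*} [CommRing R] [IsDomain R]
    (a : RawMat d) (ha : a.IsComp) :
    (∀ X : ℕ × ℕ → Fin d → R, EvC X → ∀ c : Fin d → R,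
      SSc (diffOp (X + fun _ => c)) a = SSc (diffOp X) a) ∧
    (∀ X : ℕ × ℕ → Fin d → R, EvC X → ∀ (b : Fin 2) (k : ℕ),
      SSc (diffOp (warp b k X)) a = SSc (diffOp X) a) := by
  constructor
  · intro X _ c
    rw [diffOp_add_const]
  · intro X _ b k
    rw [diffOp_warp, SSc_zeroIns a ha]
end

section
/- Let ∼ denote the equivalence relation on evC generated by X ∼ Warp_{a,k}(X) for all a ∈ {1,2}, k ∈ ℕ, together with X ∼ X + C for every constant function C. Then for all X, Y ∈ evC: X ∼ Y if and only if ⟨SS(δX), a⟩ = ⟨SS(δY), a⟩ for every matrix composition a over M_d. -/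
open scoped Classical

namespace S11
variable {α : Type*} {M : Type*} [AddCommMonoid M]

lemma finsum_mem_single (f : α → M) {S : Set α} {x : α} (hx : x ∈ S)
    (h0 : ∀ y ∈ S, y ≠ x → f y = 0) : ∑ᶠ y ∈ S, f y = f x := by
  rw [finsum_mem_inter_support_eq f S {x} ?_, finsum_mem_singleton]
  ext y
  simp only [Set.mem_inter_iff, Function.mem_support, Set.mem_singleton_iff]
  constructor
  · rintro ⟨hyS, hy⟩
    refine ⟨?_, hy⟩
    by_contra hne
    exact hy (h0 y hyS hne)
  · rintro ⟨rfl, hy⟩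
    exact ⟨hx, hy⟩

lemma finsum_mem_subset_zero (f : α → M) {S T : Set α} (hTS : T ⊆ S)
    (h0 : ∀ y ∈ S, y ∉ T → f y = 0) : ∑ᶠ y ∈ S, f y = ∑ᶠ y ∈ T, f y := by
  apply finsum_mem_inter_support_eq
  ext y
  simp only [Set.mem_inter_iff, Function.mem_support]
  constructor
  · rintro ⟨hyS, hy⟩
    refine ⟨?_, hy⟩
    by_contra hne
    exact hy (h0 y hyS hne)
  · rintro ⟨hyT, hy⟩
    exact ⟨hTS hyT, hy⟩

lemma sm_lb {m : ℕ} {ι : Fin m → ℕ} (h : StrictMono ι) :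
    ∀ (n : ℕ) (hn : n < m), n ≤ ι ⟨n, hn⟩ := by
  intro n
  induction n with
  | zero => intro _; exact Nat.zero_le _
  | succ n ih =>
    intro hn
    have h1 : ι ⟨n, by omega⟩ < ι ⟨n + 1, hn⟩ := h (by simp [Fin.lt_def])
    have h2 := ih (by omega)
    omega

lemma sm_escape {m : ℕ} {ι : Fin m → ℕ} (h : StrictMono ι) {M : ℕ} (hM : M < m) :
    ∃ s, M ≤ ι s := by
  refine ⟨⟨m - 1, by omega⟩, ?_⟩
  have := sm_lb h (m - 1) (by omega)
  omega

lemma sm_id {m : ℕ} {ι : Fin m → ℕ} (h : StrictMono ι) (hlt : ∀ s, ι s < m) :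
    ι = Fin.val := by
  have hρ : StrictMono (fun s : Fin m => m - 1 - ι (Fin.rev s)) := by
    intro s t hst
    have h1 : Fin.rev t < Fin.rev s := by simpa using hst
    have h2 := h h1
    have h3 := hlt (Fin.rev s)
    simp only []
    omega
  funext s
  have h1 := sm_lb h s.1 s.2
  simp only [Fin.eta] at h1
  have h2 := sm_lb hρ (Fin.rev s).1 (Fin.rev s).2
  simp only [Fin.eta] at h2
  rw [Fin.rev_rev] at h2
  have h3 := hlt s
  have h4 : (Fin.rev s).1 = m - (s.1 + 1) := Fin.val_rev s
  omega


section SSc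
open TwoParam
variable {d : ℕ} {R : Type*} [CommRing R]

lemma exists_coord {v : Fin d → R} (h : v ≠ 0) : ∃ j, v j ≠ 0 := by
  by_contra hc
  push_neg at hc
  exact h (funext hc)

lemma evalMon_zero_fn {m : Md d} (hm : m ≠ 0) : evalMon (0 : Fin d → R) m = 0 := by
  obtain ⟨j, hj⟩ := Finsupp.support_nonempty_iff.mpr hm
  refine Finset.prod_eq_zero hj ?_
  have : m j ≠ 0 := Finsupp.mem_support_iff.mp hj
  simp [zero_pow this]

lemma evalMon_zero_right (z : Fin d → R) : evalMon z (0 : Md d) = 1 := by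
  simp [evalMon]

lemma evalMon_add (z : Fin d → R) (m n : Md d) :
    evalMon z (m + n) = evalMon z m * evalMon z n :=
  Finsupp.prod_add_index' (fun a => pow_zero (z a)) (fun a b₁ b₂ => pow_add (z a) b₁ b₂)

lemma evalMon_single (z : Fin d → R) (j : Fin d) :
    evalMon z (Finsupp.single j 1) = z j := by
  show (Finsupp.single j 1).prod (fun j e => z j ^ e) = z j
  rw [Finsupp.prod_single_index (h := fun j' e => z j' ^ e) (pow_zero (z j))]
  exact pow_one (z j)

/-- Support bound for two-parameter data. -/
def Bnd (Z : ℕ × ℕ → Fin d → R) (M N : ℕ) : Prop :=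
  ∀ i : ℕ × ℕ, Z i ≠ 0 → i.1 < M ∧ i.2 < N

/-- inner integrand of `SSc` -/
def gg (Z : ℕ × ℕ → Fin d → R) (a : RawMat d) (ι : Fin a.rows → ℕ)
    (κ : Fin a.cols → ℕ) : R :=
  ∏ s : Fin a.rows, ∏ t : Fin a.cols, evalMon (Z (ι s, κ t)) (a.entry s t)

/-- inner sum of `SSc` -/
noncomputable def ff (Z : ℕ × ℕ → Fin d → R) (a : RawMat d) (ι : Fin a.rows → ℕ) : R :=
  ∑ᶠ κ ∈ {g : Fin a.cols → ℕ | StrictMono g}, gg Z a ι κ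

lemma SSc_def' (Z : ℕ × ℕ → Fin d → R) (a : RawMat d) :
    SSc Z a = ∑ᶠ ι ∈ {f : Fin a.rows → ℕ | StrictMono f}, ff Z a ι := rfl

lemma gg_eq_zero_row {Z : ℕ × ℕ → Fin d → R} {a : RawMat d} {ι : Fin a.rows → ℕ}
    {κ : Fin a.cols → ℕ} {s₀ : Fin a.rows} (hc : a.IsComp)
    (hz : ∀ c, Z (ι s₀, c) = 0) : gg Z a ι κ = 0 := by
  obtain ⟨t₀, ht₀, hne⟩ := hc.1 s₀ s₀.isLt
  refine Finset.prod_eq_zero (Finset.mem_univ s₀) ?_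
  refine Finset.prod_eq_zero (Finset.mem_univ (⟨t₀, ht₀⟩ : Fin a.cols)) ?_
  rw [hz]
  exact evalMon_zero_fn hne

lemma gg_eq_zero_col {Z : ℕ × ℕ → Fin d → R} {a : RawMat d} {ι : Fin a.rows → ℕ}
    {κ : Fin a.cols → ℕ} {t₀ : Fin a.cols} (hc : a.IsComp)
    (hz : ∀ r, Z (r, κ t₀) = 0) : gg Z a ι κ = 0 := by
  obtain ⟨s₀, hs₀, hne⟩ := hc.2 t₀ t₀.isLt
  refine Finset.prod_eq_zero (Finset.mem_univ (⟨s₀, hs₀⟩ : Fin a.rows)) ?_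
  refine Finset.prod_eq_zero (Finset.mem_univ t₀) ?_
  rw [hz]
  exact evalMon_zero_fn hne

lemma SSc_vanish_rows {Z : ℕ × ℕ → Fin d → R} {a : RawMat d} {M N : ℕ}
    (hb : Bnd Z M N) (hc : a.IsComp) (h : M < a.rows) : SSc Z a = 0 := by
  rw [SSc_def']
  apply finsum_mem_of_eqOn_zero
  intro ι hι
  obtain ⟨s₀, hs₀⟩ := sm_escape hι h
  apply finsum_mem_of_eqOn_zero
  intro κ _
  refine gg_eq_zero_row hc (s₀ := s₀) ?_
  intro c
  by_contra hne
  have := (hb _ hne).1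
  simp only at this
  omega

lemma SSc_vanish_cols {Z : ℕ × ℕ → Fin d → R} {a : RawMat d} {M N : ℕ}
    (hb : Bnd Z M N) (hc : a.IsComp) (h : N < a.cols) : SSc Z a = 0 := by
  rw [SSc_def']
  apply finsum_mem_of_eqOn_zero
  intro ι hι
  apply finsum_mem_of_eqOn_zero
  intro κ hκ
  obtain ⟨t₀, ht₀⟩ := sm_escape hκ h
  refine gg_eq_zero_col hc (t₀ := t₀) ?_
  intro r
  by_contra hne
  have := (hb _ hne).2
  simp only at this
  omega

lemma SSc_top {Z : ℕ × ℕ → Fin d → R} {a : RawMat d}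
    (hb : Bnd Z a.rows a.cols) (hc : a.IsComp) :
    SSc Z a = ∏ s : Fin a.rows, ∏ t : Fin a.cols, evalMon (Z (s, t)) (a.entry s t) := by
  rw [SSc_def']
  have hval : (Fin.val : Fin a.rows → ℕ) ∈ {f : Fin a.rows → ℕ | StrictMono f} :=
    Fin.val_strictMono
  rw [finsum_mem_single (ff Z a) hval ?_]
  · have hval2 : (Fin.val : Fin a.cols → ℕ) ∈ {g : Fin a.cols → ℕ | StrictMono g} :=
      Fin.val_strictMono
    rw [ff, finsum_mem_single _ hval2 ?_]
    · rfl
    · intro κ hκ hne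
      have hesc : ∃ t, a.cols ≤ κ t := by
        by_contra hno
        push_neg at hno
        exact hne (sm_id hκ hno)
      obtain ⟨t₀, ht₀⟩ := hesc
      refine gg_eq_zero_col hc (t₀ := t₀) ?_
      intro r
      by_contra hne2
      have := (hb _ hne2).2
      simp only at this
      omega
  · intro ι hι hne
    have hesc : ∃ s, a.rows ≤ ι s := by
      by_contra hno
      push_neg at hno
      exact hne (sm_id hι hno)
    obtain ⟨s₀, hs₀⟩ := hesc
    apply finsum_mem_of_eqOn_zero
    intro κ _
    refine gg_eq_zero_row hc (s₀ := s₀) ?_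
    intro c
    by_contra hne2
    have := (hb _ hne2).1
    simp only at this
    omega

end SSc

section ZeroIns
open TwoParam
variable {d : ℕ} {R : Type*} [CommRing R]

/-- skip map: order embedding of `ℕ` onto `ℕ \ {k}`. -/
def skp (k x : ℕ) : ℕ := if x < k then x else x + 1

/-- inverse of `skp` on `ℕ \ {k}`. -/
def unskp (k x : ℕ) : ℕ := if x < k then x else x - 1

lemma skp_sm (k : ℕ) : StrictMono (skp k) := by
  intro x y h
  unfold skp
  split_ifs <;> omega

lemma skp_ne (k x : ℕ) : skp k x ≠ k := by
  unfold skp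
  split_ifs <;> omega

lemma skp_unskp (k x : ℕ) (h : x ≠ k) : skp k (unskp k x) = x := by
  unfold skp unskp
  split_ifs <;> omega

lemma axC_zero (i : ℕ × ℕ) : axC 0 i = i.1 := rfl

lemma axC_one (i : ℕ × ℕ) : axC 1 i = i.2 := by
  simp [axC]

lemma shiftD_zero (i : ℕ × ℕ) : shiftD 0 i = (i.1 - 1, i.2) := rfl

lemma shiftD_one (i : ℕ × ℕ) : shiftD 1 i = (i.1, i.2 - 1) := by
  simp [shiftD]

lemma zeroIns_skip0 (Z : ℕ × ℕ → Fin d → R) (k x y : ℕ) :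
    zeroIns 0 k Z (skp k x, y) = Z (x, y) := by
  by_cases hx : x < k <;>
    simp only [zeroIns, axC_zero, shiftD_zero, skp, hx, if_pos, if_neg, if_true, if_false] <;>
    split_ifs <;> first
      | rfl
      | omega
      | (simp only [Nat.add_sub_cancel])

lemma zeroIns_hit0 (Z : ℕ × ℕ → Fin d → R) (k y : ℕ) :
    zeroIns 0 k Z (k, y) = 0 := by
  simp [zeroIns, axC_zero]

lemma zeroIns_skip1 (Z : ℕ × ℕ → Fin d → R) (k x y : ℕ) :
    zeroIns 1 k Z (x, skp k y) = Z (x, y) := by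
  by_cases hy : y < k <;>
    simp only [zeroIns, axC_one, shiftD_one, skp, hy, if_pos, if_neg, if_true, if_false] <;>
    split_ifs <;> first
      | rfl
      | omega
      | (simp only [Nat.add_sub_cancel])

lemma zeroIns_hit1 (Z : ℕ × ℕ → Fin d → R) (k x : ℕ) :
    zeroIns 1 k Z (x, k) = 0 := by
  simp [zeroIns, axC_one]

lemma SSc_zeroIns0 (Z : ℕ × ℕ → Fin d → R) (k : ℕ) {a : RawMat d} (hc : a.IsComp) :
    SSc (zeroIns 0 k Z) a = SSc Z a := by
  rw [SSc_def', SSc_def']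
  have hff : ∀ ι : Fin a.rows → ℕ,
      ff (zeroIns 0 k Z) a (skp k ∘ ι) = ff Z a ι := by
    intro ι
    refine finsum_mem_congr rfl fun κ _ => ?_
    unfold gg
    refine Finset.prod_congr rfl fun s _ => Finset.prod_congr rfl fun t _ => ?_
    rw [Function.comp_apply, zeroIns_skip0]
  rw [finsum_mem_subset_zero (ff (zeroIns 0 k Z) a)
      (S := {f : Fin a.rows → ℕ | StrictMono f})
      (T := {f : Fin a.rows → ℕ | StrictMono f ∧ ∀ s, f s ≠ k})
      (fun f hf => hf.1) ?_]
  · refine (finsum_mem_eq_of_bijOn (fun ι => skp k ∘ ι) ⟨?_, ?_, ?_⟩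
      (fun ι _ => (hff ι).symm)).symm
    · intro ι hι
      exact ⟨(skp_sm k).comp hι, fun s => skp_ne k (ι s)⟩
    · intro ι₁ _ ι₂ _ h
      funext s
      exact (skp_sm k).injective (congrFun h s)
    · rintro ι' ⟨hsm', havoid⟩
      refine ⟨unskp k ∘ ι', ?_, ?_⟩
      · intro u v huv
        have h1 := hsm' huv
        have h2 := havoid u
        have h3 := havoid v
        simp only [Function.comp_apply, unskp]
        split_ifs <;> omega
      · funext s
        exact skp_unskp k (ι' s) (havoid s)
  · rintro ι hι hni
    simp only [Set.mem_setOf_eq] at hni hι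
    push_neg at hni
    obtain ⟨s₀, hs₀⟩ := hni hι
    apply finsum_mem_of_eqOn_zero
    intro κ _
    refine gg_eq_zero_row hc (s₀ := s₀) fun c => ?_
    rw [hs₀]
    exact zeroIns_hit0 Z k c

lemma SSc_zeroIns1 (Z : ℕ × ℕ → Fin d → R) (k : ℕ) {a : RawMat d} (hc : a.IsComp) :
    SSc (zeroIns 1 k Z) a = SSc Z a := by
  rw [SSc_def', SSc_def']
  refine finsum_mem_congr rfl fun ι _ => ?_
  unfold ff
  have hgg : ∀ κ : Fin a.cols → ℕ,
      gg (zeroIns 1 k Z) a ι (skp k ∘ κ) = gg Z a ι κ := by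
    intro κ
    unfold gg
    refine Finset.prod_congr rfl fun s _ => Finset.prod_congr rfl fun t _ => ?_
    rw [Function.comp_apply, zeroIns_skip1]
  rw [finsum_mem_subset_zero (gg (zeroIns 1 k Z) a ι)
      (S := {g : Fin a.cols → ℕ | StrictMono g})
      (T := {g : Fin a.cols → ℕ | StrictMono g ∧ ∀ t, g t ≠ k})
      (fun f hf => hf.1) ?_]
  · refine (finsum_mem_eq_of_bijOn (fun κ => skp k ∘ κ) ⟨?_, ?_, ?_⟩
      (fun κ _ => (hgg κ).symm)).symm
    · intro κ hκ
      exact ⟨(skp_sm k).comp hκ, fun t => skp_ne k (κ t)⟩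
    · intro κ₁ _ κ₂ _ h
      funext t
      exact (skp_sm k).injective (congrFun h t)
    · rintro κ' ⟨hsm', havoid⟩
      refine ⟨unskp k ∘ κ', ?_, ?_⟩
      · intro u v huv
        have h1 := hsm' huv
        have h2 := havoid u
        have h3 := havoid v
        simp only [Function.comp_apply, unskp]
        split_ifs <;> omega
      · funext t
        exact skp_unskp k (κ' t) (havoid t)
  · rintro κ hκ hni
    simp only [Set.mem_setOf_eq] at hni hκ
    push_neg at hni
    obtain ⟨t₀, ht₀⟩ := hni hκ
    refine gg_eq_zero_col hc (t₀ := t₀) fun r => ?_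
    rw [ht₀]
    exact zeroIns_hit1 Z k r

lemma SSc_zeroIns (ax : Fin 2) (Z : ℕ × ℕ → Fin d → R) (k : ℕ) {a : RawMat d}
    (hc : a.IsComp) : SSc (zeroIns ax k Z) a = SSc Z a := by
  fin_cases ax
  · exact SSc_zeroIns0 Z k hc
  · exact SSc_zeroIns1 Z k hc

end ZeroIns

section Diff
open TwoParam
variable {d : ℕ} {R : Type*} [CommRing R]

lemma diffOp_add_const (X : ℕ × ℕ → Fin d → R) (c : Fin d → R) :
    diffOp (X + fun _ => c) = diffOp X := by
  funext i
  simp only [diffOp, Pi.add_apply]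
  abel

lemma diffOp_warp0 (k : ℕ) (X : ℕ × ℕ → Fin d → R) :
    diffOp (warp 0 k X) = zeroIns 0 k (diffOp X) := by
  funext i
  obtain ⟨i1, i2⟩ := i
  have hW : ∀ p : ℕ × ℕ, warp 0 k X p = if p.1 ≤ k then X p else X (p.1 - 1, p.2) := by
    intro p; rfl
  have hZ : ∀ p : ℕ × ℕ, zeroIns 0 k (diffOp X) p =
      if p.1 < k then diffOp X p else if p.1 = k then 0 else diffOp X (p.1 - 1, p.2) := by
    intro p; rfl
  rw [hZ]
  simp only [diffOp, hW]
  rcases Nat.lt_trichotomy i1 k with h | h | h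
  · rw [if_pos (by omega : i1 + 1 ≤ k), if_pos (by omega : i1 + 1 ≤ k),
      if_pos (by omega : i1 ≤ k), if_pos (by omega : i1 ≤ k), if_pos (by simpa using h)]
  · subst h
    rw [if_neg (by simp), if_neg (by simp), if_pos (by simp), if_pos (by simp),
      if_neg (by simp), if_pos (by simp)]
    simp only [Nat.add_sub_cancel]
    abel
  · rw [if_neg (by omega : ¬ i1 + 1 ≤ k), if_neg (by omega : ¬ i1 + 1 ≤ k),
      if_neg (by omega : ¬ i1 ≤ k), if_neg (by omega : ¬ i1 ≤ k),
      if_neg (by omega), if_neg (by omega)]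
    simp only [Nat.add_sub_cancel]
    have h1 : i1 - 1 + 1 = i1 := by omega
    rw [h1]

lemma diffOp_warp1 (k : ℕ) (X : ℕ × ℕ → Fin d → R) :
    diffOp (warp 1 k X) = zeroIns 1 k (diffOp X) := by
  funext i
  obtain ⟨i1, i2⟩ := i
  have hW : ∀ p : ℕ × ℕ, warp 1 k X p = if p.2 ≤ k then X p else X (p.1, p.2 - 1) := by
    intro p
    simp only [warp, axC_one, shiftD_one]
  simp only [diffOp, zeroIns, axC_one, shiftD_one, hW]
  rcases Nat.lt_trichotomy i2 k with h | h | h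
  · rw [if_pos (by omega : i2 + 1 ≤ k), if_pos (by omega : i2 ≤ k),
      if_pos (by omega : i2 + 1 ≤ k), if_pos (by omega : i2 ≤ k), if_pos (by simpa using h)]
  · subst h
    rw [if_neg (by simp), if_pos (by simp), if_neg (by simp), if_pos (by simp),
      if_neg (by simp), if_pos (by simp)]
    simp only [Nat.add_sub_cancel]
    abel
  · rw [if_neg (by omega : ¬ i2 + 1 ≤ k), if_neg (by omega : ¬ i2 ≤ k),
      if_neg (by omega : ¬ i2 + 1 ≤ k), if_neg (by omega : ¬ i2 ≤ k),
      if_neg (by omega), if_neg (by omega)]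
    simp only [Nat.add_sub_cancel]
    have h1 : i2 - 1 + 1 = i2 := by omega
    rw [h1]

lemma diffOp_warp (ax : Fin 2) (k : ℕ) (X : ℕ × ℕ → Fin d → R) :
    diffOp (warp ax k X) = zeroIns ax k (diffOp X) := by
  fin_cases ax
  · exact diffOp_warp0 k X
  · exact diffOp_warp1 k X

lemma evc_outside {X : ℕ × ℕ → Fin d → R} (hX : EvC X) :
    ∃ n : ℕ × ℕ, ∀ i j : ℕ × ℕ,
      ¬(i.1 ≤ n.1 ∧ i.2 ≤ n.2) → ¬(j.1 ≤ n.1 ∧ j.2 ≤ n.2) → X i = X j := by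
  obtain ⟨n, hn⟩ := hX
  refine ⟨n, fun i j hi hj => ?_⟩
  by_contra h
  rcases hn i j h with h' | h'
  · exact hi h'
  · exact hj h'

lemma bnd_diffOp {X : ℕ × ℕ → Fin d → R} (hX : EvC X) :
    ∃ M N, Bnd (diffOp X) M N := by
  obtain ⟨n, hn⟩ := evc_outside hX
  refine ⟨n.1 + 1, n.2 + 1, ?_⟩
  rintro ⟨i, j⟩ hne
  by_contra hcon
  apply hne
  rw [not_and_or] at hcon
  push_neg at hcon
  have hz : diffOp X (i, j) = 0 := by
    rcases hcon with h | h
    · have e1 : X (i + 1, j + 1) = X (i, j) :=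
        hn _ _ (by intro hh; simp at hh; omega) (by intro hh; simp at hh; omega)
      have e2 : X (i + 1, j) = X (i, j) :=
        hn _ _ (by intro hh; simp at hh; omega) (by intro hh; simp at hh; omega)
      have e3 : X (i, j + 1) = X (i, j) :=
        hn _ _ (by intro hh; simp at hh; omega) (by intro hh; simp at hh; omega)
      simp only [diffOp]
      rw [e1, e2, e3]
      abel
    · have e1 : X (i + 1, j + 1) = X (i, j) :=
        hn _ _ (by intro hh; simp at hh; omega) (by intro hh; simp at hh; omega)
      have e2 : X (i + 1, j) = X (i, j) :=
        hn _ _ (by intro hh; simp at hh; omega) (by intro hh; simp at hh; omega)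
      have e3 : X (i, j + 1) = X (i, j) :=
        hn _ _ (by intro hh; simp at hh; omega) (by intro hh; simp at hh; omega)
      simp only [diffOp]
      rw [e1, e2, e3]
      abel
  exact hz

lemma row_eq_of_diff_row_zero {X : ℕ × ℕ → Fin d → R} (hX : EvC X) (r : ℕ)
    (h : ∀ c, diffOp X (r, c) = 0) : ∀ j, X (r + 1, j) = X (r, j) := by
  obtain ⟨n, hn⟩ := evc_outside hX
  intro j
  have key : ∀ t : ℕ, X (r + 1, j + t) - X (r, j + t) = X (r + 1, j) - X (r, j) := by
    intro t
    induction t with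
    | zero => rfl
    | succ t ih =>
      have h3 : X (r + 1, j + t + 1) - X (r + 1, j + t) - X (r, j + t + 1) + X (r, j + t)
          = 0 := h (j + t)
      have h6 : X (r + 1, j + t + 1) - X (r, j + t + 1)
          = X (r + 1, j + t) - X (r, j + t) := by
        rw [← sub_eq_zero, ← h3]
        abel
      show X (r + 1, j + t + 1) - X (r, j + t + 1) = _
      rw [h6, ih]
  have houts : X (r + 1, j + (n.2 + 1)) = X (r, j + (n.2 + 1)) :=
    hn _ _ (by intro hh; simp at hh; omega) (by intro hh; simp at hh; omega)
  have hk := key (n.2 + 1)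
  rw [houts, sub_self] at hk
  have hk' := hk.symm
  rwa [sub_eq_zero] at hk'

lemma col_eq_of_diff_col_zero {X : ℕ × ℕ → Fin d → R} (hX : EvC X) (c : ℕ)
    (h : ∀ r, diffOp X (r, c) = 0) : ∀ i, X (i, c + 1) = X (i, c) := by
  obtain ⟨n, hn⟩ := evc_outside hX
  intro i
  have key : ∀ t : ℕ, X (i + t, c + 1) - X (i + t, c) = X (i, c + 1) - X (i, c) := by
    intro t
    induction t with
    | zero => rfl
    | succ t ih =>
      have h3 : X (i + t + 1, c + 1) - X (i + t + 1, c) - X (i + t, c + 1) + X (i + t, c)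
          = 0 := h (i + t)
      have h6 : X (i + t + 1, c + 1) - X (i + t + 1, c)
          = X (i + t, c + 1) - X (i + t, c) := by
        rw [← sub_eq_zero, ← h3]
        abel
      show X (i + t + 1, c + 1) - X (i + t + 1, c) = _
      rw [h6, ih]
  have houts : X (i + (n.1 + 1), c + 1) = X (i + (n.1 + 1), c) :=
    hn _ _ (by intro hh; simp at hh; omega) (by intro hh; simp at hh; omega)
  have hk := key (n.1 + 1)
  rw [houts, sub_self] at hk
  have hk' := hk.symm
  rwa [sub_eq_zero] at hk'

lemma evc_precomp {X : ℕ × ℕ → Fin d → R} (hX : EvC X) (g : ℕ × ℕ → ℕ × ℕ)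
    (hg : ∀ p, p.1 ≤ (g p).1 ∧ p.2 ≤ (g p).2) : EvC (fun i => X (g i)) := by
  obtain ⟨n, hn⟩ := hX
  refine ⟨n, fun i j hne => ?_⟩
  rcases hn (g i) (g j) hne with hin | hin
  · exact Or.inl ⟨le_trans (hg i).1 hin.1, le_trans (hg i).2 hin.2⟩
  · exact Or.inr ⟨le_trans (hg j).1 hin.1, le_trans (hg j).2 hin.2⟩

lemma KR0 {X : ℕ × ℕ → Fin d → R} (hX : EvC X) (r : ℕ)
    (h : ∀ c, diffOp X (r, c) = 0) :
    ∃ U : ℕ × ℕ → Fin d → R, X = warp 0 r U ∧ EvC U ∧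
      diffOp X = zeroIns 0 r (diffOp U) ∧
      ∀ i : ℕ × ℕ, diffOp U i = if i.1 < r then diffOp X i else diffOp X (i.1 + 1, i.2) := by
  have hrow := row_eq_of_diff_row_zero hX r h
  set U : ℕ × ℕ → Fin d → R := fun i => X (if i.1 ≤ r then i else (i.1 + 1, i.2)) with hUdef
  have hU1 : ∀ p : ℕ × ℕ, p.1 ≤ r → U p = X p := by
    intro p hp
    simp only [hUdef, if_pos hp]
  have hU2 : ∀ p : ℕ × ℕ, r < p.1 → U p = X (p.1 + 1, p.2) := by
    intro p hp
    simp only [hUdef, if_neg (by omega : ¬ p.1 ≤ r)]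
  have hdel : ∀ i : ℕ × ℕ,
      diffOp U i = if i.1 < r then diffOp X i else diffOp X (i.1 + 1, i.2) := by
    rintro ⟨i1, i2⟩
    by_cases hi : i1 < r
    · rw [if_pos hi]
      show U (i1 + 1, i2 + 1) - U (i1 + 1, i2) - U (i1, i2 + 1) + U (i1, i2) = _
      rw [hU1 _ (by omega : ((i1 + 1 : ℕ), i2 + 1).1 ≤ r), hU1 _ (by omega : ((i1 + 1 : ℕ), i2).1 ≤ r),
        hU1 _ (by omega : ((i1 : ℕ), i2 + 1).1 ≤ r), hU1 _ (by omega : ((i1 : ℕ), i2).1 ≤ r)]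
      rfl
    · rw [if_neg hi]
      have hUeq : ∀ y, U (i1, y) = X (i1 + 1, y) := by
        intro y
        by_cases h1 : i1 ≤ r
        · have hir : i1 = r := by omega
          rw [hU1 _ (by simpa using h1)]
          subst hir
          exact (hrow y).symm
        · exact hU2 _ (by omega)
      have hUeq2 : ∀ y, U (i1 + 1, y) = X (i1 + 2, y) := fun y => hU2 _ (by omega)
      show U (i1 + 1, i2 + 1) - U (i1 + 1, i2) - U (i1, i2 + 1) + U (i1, i2) = _
      rw [hUeq2, hUeq2, hUeq, hUeq]
      rfl
  refine ⟨U, ?_, ?_, ?_, hdel⟩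
  · funext i
    obtain ⟨i1, i2⟩ := i
    show X (i1, i2) = if (i1 : ℕ) ≤ r then U (i1, i2) else U (i1 - 1, i2)
    by_cases h1 : i1 ≤ r
    · rw [if_pos h1, hU1 _ (by simpa using h1)]
    · rw [if_neg h1]
      by_cases h2 : i1 - 1 ≤ r
      · have hir : i1 = r + 1 := by omega
        rw [hU1 _ (by simp; omega)]
        subst hir
        simp only [Nat.add_sub_cancel]
        exact hrow i2
      · rw [hU2 _ (by simp; omega)]
        have : i1 - 1 + 1 = i1 := by omega
        simp only []
        rw [this]
  · exact evc_precomp hX _ (by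
      intro p
      constructor
      · split_ifs <;> simp
      · split_ifs <;> simp)
  · funext i
    obtain ⟨i1, i2⟩ := i
    show diffOp X (i1, i2) =
      if (i1 : ℕ) < r then diffOp U (i1, i2)
      else if (i1 : ℕ) = r then 0 else diffOp U (i1 - 1, i2)
    by_cases h1 : i1 < r
    · rw [if_pos h1, hdel, if_pos h1]
    · rw [if_neg h1]
      by_cases h2 : i1 = r
      · rw [if_pos h2, h2]
        exact h i2
      · rw [if_neg h2, hdel]
        rw [if_neg (by simp; omega)]
        have : i1 - 1 + 1 = i1 := by omega
        simp only []
        rw [this]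
end Diff

section Diff2
open TwoParam
variable {d : ℕ} {R : Type*} [CommRing R]

lemma KR1 {X : ℕ × ℕ → Fin d → R} (hX : EvC X) (c : ℕ)
    (h : ∀ rr, diffOp X (rr, c) = 0) :
    ∃ U : ℕ × ℕ → Fin d → R, X = warp 1 c U ∧ EvC U ∧
      diffOp X = zeroIns 1 c (diffOp U) ∧
      ∀ i : ℕ × ℕ, diffOp U i = if i.2 < c then diffOp X i else diffOp X (i.1, i.2 + 1) := by
  have hcol := col_eq_of_diff_col_zero hX c h
  set U : ℕ × ℕ → Fin d → R := fun i => X (if i.2 ≤ c then i else (i.1, i.2 + 1)) with hUdef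
  have hU1 : ∀ p : ℕ × ℕ, p.2 ≤ c → U p = X p := by
    intro p hp
    simp only [hUdef, if_pos hp]
  have hU2 : ∀ p : ℕ × ℕ, c < p.2 → U p = X (p.1, p.2 + 1) := by
    intro p hp
    simp only [hUdef, if_neg (by omega : ¬ p.2 ≤ c)]
  have hdel : ∀ i : ℕ × ℕ,
      diffOp U i = if i.2 < c then diffOp X i else diffOp X (i.1, i.2 + 1) := by
    rintro ⟨i1, i2⟩
    by_cases hi : i2 < c
    · rw [if_pos hi]
      show U (i1 + 1, i2 + 1) - U (i1 + 1, i2) - U (i1, i2 + 1) + U (i1, i2) = _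
      rw [hU1 _ (by omega : ((i1 + 1 : ℕ), i2 + 1).2 ≤ c),
        hU1 _ (by omega : ((i1 + 1 : ℕ), i2).2 ≤ c),
        hU1 _ (by omega : ((i1 : ℕ), i2 + 1).2 ≤ c), hU1 _ (by omega : ((i1 : ℕ), i2).2 ≤ c)]
      rfl
    · rw [if_neg hi]
      have hUeq : ∀ y, U (y, i2) = X (y, i2 + 1) := by
        intro y
        by_cases h1 : i2 ≤ c
        · have hir : i2 = c := by omega
          rw [hU1 _ (by simpa using h1)]
          subst hir
          exact (hcol y).symm
        · exact hU2 _ (by omega)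
      have hUeq2 : ∀ y, U (y, i2 + 1) = X (y, i2 + 2) := fun y => hU2 _ (by omega)
      show U (i1 + 1, i2 + 1) - U (i1 + 1, i2) - U (i1, i2 + 1) + U (i1, i2) = _
      rw [hUeq2, hUeq2, hUeq, hUeq]
      rfl
  refine ⟨U, ?_, ?_, ?_, hdel⟩
  · funext i
    obtain ⟨i1, i2⟩ := i
    have hwv : warp 1 c U (i1, i2) = if (i2 : ℕ) ≤ c then U (i1, i2) else U (i1, i2 - 1) := by
      simp only [warp, axC_one, shiftD_one]
    rw [hwv]
    by_cases h1 : i2 ≤ c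
    · rw [if_pos h1, hU1 _ (by simpa using h1)]
    · rw [if_neg h1]
      by_cases h2 : i2 - 1 ≤ c
      · have hir : i2 = c + 1 := by omega
        rw [hU1 _ (by simp; omega)]
        subst hir
        simp only [Nat.add_sub_cancel]
        exact hcol i1
      · rw [hU2 _ (by simp; omega)]
        have h3 : i2 - 1 + 1 = i2 := by omega
        simp only []
        rw [h3]
  · exact evc_precomp hX _ (by
      intro p
      constructor
      · split_ifs <;> simp
      · split_ifs <;> simp)
  · funext i
    obtain ⟨i1, i2⟩ := i
    have hzv : zeroIns 1 c (diffOp U) (i1, i2) =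
        if (i2 : ℕ) < c then diffOp U (i1, i2)
        else if (i2 : ℕ) = c then 0 else diffOp U (i1, i2 - 1) := by
      simp only [zeroIns, axC_one, shiftD_one]
    rw [hzv]
    by_cases h1 : i2 < c
    · rw [if_pos h1, hdel, if_pos h1]
    · rw [if_neg h1]
      by_cases h2 : i2 = c
      · rw [if_pos h2, h2]
        exact h i1
      · rw [if_neg h2, hdel]
        rw [if_neg (by simp; omega)]
        have h3 : i2 - 1 + 1 = i2 := by omega
        simp only []
        rw [h3]

lemma diff_zero_const {D : ℕ × ℕ → Fin d → R} (hD : EvC D)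
    (h : ∀ i, diffOp D i = 0) : ∃ c, ∀ i, D i = c := by
  have hrow : ∀ r j, D (r + 1, j) = D (r, j) := fun r =>
    row_eq_of_diff_row_zero hD r (fun cc => h (r, cc))
  have hcol : ∀ cc i, D (i, cc + 1) = D (i, cc) := fun cc =>
    col_eq_of_diff_col_zero hD cc (fun rr => h (rr, cc))
  refine ⟨D (0, 0), ?_⟩
  rintro ⟨i1, i2⟩
  have h1 : ∀ m y, D (m, y) = D (0, y) := by
    intro m
    induction m with
    | zero => intro y; rfl
    | succ m ih => intro y; rw [hrow m y, ih y]
  have h2 : ∀ y, D (0, y) = D (0, 0) := by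
    intro y
    induction y with
    | zero => rfl
    | succ y ih => rw [hcol y 0, ih]
  rw [h1 i1 i2, h2 i2]

lemma evc_sub {X Y : ℕ × ℕ → Fin d → R} (hX : EvC X) (hY : EvC Y) :
    EvC (fun i => X i - Y i) := by
  obtain ⟨nX, hnX⟩ := hX
  obtain ⟨nY, hnY⟩ := hY
  refine ⟨(max nX.1 nY.1, max nX.2 nY.2), ?_⟩
  intro i j hne
  have hor : X i ≠ X j ∨ Y i ≠ Y j := by
    by_contra hcon
    push_neg at hcon
    apply hne
    simp only [hcon.1, hcon.2]
  rcases hor with hh | hh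
  · rcases hnX i j hh with hin | hin
    · exact Or.inl ⟨by simp; omega, by simp; omega⟩
    · exact Or.inr ⟨by simp; omega, by simp; omega⟩
  · rcases hnY i j hh with hin | hin
    · exact Or.inl ⟨by simp; omega, by simp; omega⟩
    · exact Or.inr ⟨by simp; omega, by simp; omega⟩

end Diff2

section Reduce
open TwoParam
variable {d : ℕ} {R : Type*} [CommRing R]

/-- compactly supported with exact bounding box -/
def Compact (Z : ℕ × ℕ → Fin d → R) (M N : ℕ) : Prop :=
  Bnd Z M N ∧ (∀ r < M, ∃ c < N, Z (r, c) ≠ 0) ∧ (∀ c < N, ∃ r < M, Z (r, c) ≠ 0)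

/-- the generating relation of statement 11 -/
def rel11 (U W : ℕ × ℕ → Fin d → R) : Prop :=
  (∃ (a : Fin 2) (k : ℕ), W = warp a k U) ∨ (∃ c : Fin d → R, W = U + fun _ => c)

lemma reduce (fuel : ℕ) : ∀ (M N : ℕ) (X : ℕ × ℕ → Fin d → R), M + N ≤ fuel →
    EvC X → Bnd (diffOp X) M N →
    ∃ (X' : ℕ × ℕ → Fin d → R) (M' N' : ℕ),
      Relation.EqvGen rel11 X X' ∧ EvC X' ∧ Compact (diffOp X') M' N' ∧
      ∀ a : RawMat d, a.IsComp → SSc (diffOp X') a = SSc (diffOp X) a := by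
  induction fuel with
  | zero =>
    intro M N X hf hX hb
    refine ⟨X, 0, 0, Relation.EqvGen.refl X, hX, ⟨?_, ?_, ?_⟩, fun a _ => rfl⟩
    · intro i hi
      have := hb i hi
      omega
    · intro r hr
      omega
    · intro c hc
      omega
  | succ fuel ih =>
    intro M N X hf hX hb
    by_cases hr : ∃ r < M, ∀ c, diffOp X (r, c) = 0
    · obtain ⟨r, hrM, hrz⟩ := hr
      obtain ⟨U, hXw, hU, hzi, hdel⟩ := KR0 hX r hrz
      have hbU : Bnd (diffOp U) (M - 1) N := by
        intro i hne
        rw [hdel i] at hne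
        by_cases hc1 : i.1 < r
        · rw [if_pos hc1] at hne
          have := hb i hne
          omega
        · rw [if_neg hc1] at hne
          have := hb _ hne
          simp only [] at this
          omega
      obtain ⟨X', M', N', hrel, hX', hcomp, hss⟩ := ih (M - 1) N U (by omega) hU hbU
      refine ⟨X', M', N', ?_, hX', hcomp, ?_⟩
      · refine Relation.EqvGen.trans X U X' ?_ hrel
        exact Relation.EqvGen.symm U X (Relation.EqvGen.rel U X (Or.inl ⟨0, r, hXw⟩))
      · intro a hc
        rw [hss a hc, hzi]
        exact (SSc_zeroIns0 (diffOp U) r hc).symm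
    · by_cases hcc : ∃ c < N, ∀ rr, diffOp X (rr, c) = 0
      · obtain ⟨c, hcN, hcz⟩ := hcc
        obtain ⟨U, hXw, hU, hzi, hdel⟩ := KR1 hX c hcz
        have hbU : Bnd (diffOp U) M (N - 1) := by
          intro i hne
          rw [hdel i] at hne
          by_cases hc1 : i.2 < c
          · rw [if_pos hc1] at hne
            have := hb i hne
            omega
          · rw [if_neg hc1] at hne
            have := hb _ hne
            simp only [] at this
            omega
        obtain ⟨X', M', N', hrel, hX', hcomp, hss⟩ := ih M (N - 1) U (by omega) hU hbU
        refine ⟨X', M', N', ?_, hX', hcomp, ?_⟩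
        · refine Relation.EqvGen.trans X U X' ?_ hrel
          exact Relation.EqvGen.symm U X (Relation.EqvGen.rel U X (Or.inl ⟨1, c, hXw⟩))
        · intro a hc'
          rw [hss a hc', hzi]
          exact (SSc_zeroIns1 (diffOp U) c hc').symm
      · push_neg at hr hcc
        refine ⟨X, M, N, Relation.EqvGen.refl X, hX, ⟨hb, ?_, ?_⟩, fun a _ => rfl⟩
        · intro r hrM
          obtain ⟨cc, hcc'⟩ := hr r hrM
          exact ⟨cc, (hb _ hcc').2, hcc'⟩
        · intro cc hccN
          obtain ⟨rr, hrr⟩ := hcc cc hccN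
          exact ⟨rr, (hb _ hrr).1, hrr⟩

end Reduce

section Compact
open TwoParam
variable {d : ℕ} {R : Type*} [CommRing R]

noncomputable def someCoord {v : Fin d → R} (h : v ≠ 0) : Fin d :=
  Classical.choose (exists_coord h)

lemma someCoord_spec {v : Fin d → R} (h : v ≠ 0) : v (someCoord h) ≠ 0 :=
  Classical.choose_spec (exists_coord h)

noncomputable def baseComp (Z : ℕ × ℕ → Fin d → R) (M N : ℕ) (hb : Bnd Z M N) :
    RawMat d where
  rows := M
  cols := N
  entry := fun s t => if h : Z (s, t) ≠ 0 then Finsupp.single (someCoord h) 1 else 0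
  entry_eq_zero := by
    intro i j hij
    show (if h : Z (i, j) ≠ 0 then Finsupp.single (someCoord h) 1 else 0) = 0
    rw [dif_neg]
    intro hne
    have h2 := hb (i, j) hne
    simp only [] at h2
    omega

lemma baseComp_isComp {Z : ℕ × ℕ → Fin d → R} {M N : ℕ} (hZ : Compact Z M N) :
    (baseComp Z M N hZ.1).IsComp := by
  constructor
  · intro i hi
    obtain ⟨c, hcN, hne⟩ := hZ.2.1 i hi
    refine ⟨c, hcN, ?_⟩
    show (if h : Z (i, c) ≠ 0 then Finsupp.single (someCoord h) 1 else 0) ≠ 0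
    rw [dif_pos hne]
    exact fun hcon => one_ne_zero (Finsupp.single_eq_zero.mp hcon)
  · intro c hc
    obtain ⟨r, hrM, hne⟩ := hZ.2.2 c hc
    refine ⟨r, hrM, ?_⟩
    show (if h : Z (r, c) ≠ 0 then Finsupp.single (someCoord h) 1 else 0) ≠ 0
    rw [dif_pos hne]
    exact fun hcon => one_ne_zero (Finsupp.single_eq_zero.mp hcon)

variable [IsDomain R]

lemma ssc_base_ne_zero {Z : ℕ × ℕ → Fin d → R} {M N : ℕ} (hZ : Compact Z M N) :
    SSc Z (baseComp Z M N hZ.1) ≠ 0 := by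
  rw [SSc_top hZ.1 (baseComp_isComp hZ)]
  apply Finset.prod_ne_zero_iff.mpr
  intro s _
  apply Finset.prod_ne_zero_iff.mpr
  intro t _
  show evalMon _ (if h : Z ((s : ℕ), (t : ℕ)) ≠ 0 then Finsupp.single (someCoord h) 1 else 0) ≠ 0
  by_cases h : Z ((s : ℕ), (t : ℕ)) ≠ 0
  · rw [dif_pos h, evalMon_single]
    exact someCoord_spec h
  · rw [dif_neg h, evalMon_zero_right]
    exact one_ne_zero

lemma finsupp_add_ne {f g : Md d} (hf : f ≠ 0) : f + g ≠ 0 := by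
  intro h
  apply hf
  ext x
  have h2 := DFunLike.congr_fun h x
  simp only [Finsupp.add_apply, Finsupp.coe_zero, Pi.zero_apply] at h2 ⊢
  omega

/-- bump the entry at `(s, t)` by `x_j`. -/
noncomputable def insMat (a : RawMat d) (s t : ℕ) (hs : s < a.rows) (ht : t < a.cols)
    (j : Fin d) : RawMat d where
  rows := a.rows
  cols := a.cols
  entry := fun s' t' =>
    a.entry s' t' + if s' = s ∧ t' = t then Finsupp.single j 1 else 0
  entry_eq_zero := by
    intro i' j' hij
    show a.entry i' j' + (if i' = s ∧ j' = t then Finsupp.single j 1 else 0) = 0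
    rw [a.entry_eq_zero i' j' hij, if_neg, add_zero]
    rintro ⟨rfl, rfl⟩
    rcases hij with h | h <;> omega

lemma insMat_isComp {a : RawMat d} (hc : a.IsComp) {s t : ℕ} (hs : s < a.rows)
    (ht : t < a.cols) (j : Fin d) : (insMat a s t hs ht j).IsComp := by
  constructor
  · intro i hi
    obtain ⟨c, hcn, hne⟩ := hc.1 i hi
    exact ⟨c, hcn, finsupp_add_ne hne⟩
  · intro c hcn
    obtain ⟨i, hi, hne⟩ := hc.2 c hcn
    exact ⟨i, hi, finsupp_add_ne hne⟩

lemma SSc_insMat {Z : ℕ × ℕ → Fin d → R} {a : RawMat d}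
    (hb : Bnd Z a.rows a.cols) (hc : a.IsComp) {s t : ℕ} (hs : s < a.rows)
    (ht : t < a.cols) (j : Fin d) :
    SSc Z (insMat a s t hs ht j) = SSc Z a * Z (s, t) j := by
  rw [SSc_top (a := insMat a s t hs ht j) hb (insMat_isComp hc hs ht j),
    SSc_top hb hc]
  simp only [insMat]
  have hfac : ∀ (s' : Fin a.rows) (t' : Fin a.cols),
      evalMon (Z ((s' : ℕ), (t' : ℕ)))
          (a.entry s' t' + if (s' : ℕ) = s ∧ (t' : ℕ) = t then Finsupp.single j 1 else 0)
        = evalMon (Z ((s' : ℕ), (t' : ℕ))) (a.entry s' t') *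
          (if (s' : ℕ) = s ∧ (t' : ℕ) = t then Z (s, t) j else 1) := by
    intro s' t'
    by_cases hst : (s' : ℕ) = s ∧ (t' : ℕ) = t
    · rw [if_pos hst, if_pos hst, evalMon_add, evalMon_single, hst.1, hst.2]
    · rw [if_neg hst, if_neg hst, add_zero, mul_one]
  simp only [hfac]
  rw [Finset.prod_congr rfl (fun s' _ => Finset.prod_mul_distrib),
    Finset.prod_mul_distrib]
  congr 1
  have inner : ∀ s' : Fin a.rows,
      (∏ t' : Fin a.cols, if (s' : ℕ) = s ∧ (t' : ℕ) = t then Z (s, t) j else 1)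
        = if (s' : ℕ) = s then Z (s, t) j else 1 := by
    intro s'
    by_cases hss : (s' : ℕ) = s
    · rw [if_pos hss]
      rw [Finset.prod_eq_single_of_mem (⟨t, ht⟩ : Fin a.cols) (Finset.mem_univ _) ?_]
      · rw [if_pos ⟨hss, rfl⟩]
      · intro b _ hbne
        rw [if_neg]
        rintro ⟨-, hbt⟩
        exact hbne (Fin.ext hbt)
    · rw [if_neg hss]
      apply Finset.prod_eq_one
      intro t' _
      rw [if_neg (fun hcon => hss hcon.1)]
  refine (Finset.prod_congr (s₂ := (Finset.univ : Finset (Fin a.rows))) rfl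
    (fun s' _ => inner s')).trans ?_
  rw [Finset.prod_eq_single_of_mem (⟨s, hs⟩ : Fin a.rows) (Finset.mem_univ _) ?_]
  · rw [if_pos rfl]
  · intro b _ hbne
    rw [if_neg (fun hcon => hbne (Fin.ext hcon))]

lemma compact_eq {Z W : ℕ × ℕ → Fin d → R} {M1 N1 M2 N2 : ℕ}
    (hZ : Compact Z M1 N1) (hW : Compact W M2 N2)
    (hss : ∀ a : RawMat d, a.IsComp → SSc Z a = SSc W a) : Z = W := by
  have h1 : ¬(M2 < M1 ∨ N2 < N1) := by
    rintro (h | h)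
    · have hv := hss (baseComp Z M1 N1 hZ.1) (baseComp_isComp hZ)
      have h0 : SSc W (baseComp Z M1 N1 hZ.1) = 0 :=
        SSc_vanish_rows hW.1 (baseComp_isComp hZ) h
      exact ssc_base_ne_zero hZ (hv.trans h0)
    · have hv := hss (baseComp Z M1 N1 hZ.1) (baseComp_isComp hZ)
      have h0 : SSc W (baseComp Z M1 N1 hZ.1) = 0 :=
        SSc_vanish_cols hW.1 (baseComp_isComp hZ) h
      exact ssc_base_ne_zero hZ (hv.trans h0)
  have h2 : ¬(M1 < M2 ∨ N1 < N2) := by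
    rintro (h | h)
    · have hv := hss (baseComp W M2 N2 hW.1) (baseComp_isComp hW)
      have h0 : SSc Z (baseComp W M2 N2 hW.1) = 0 :=
        SSc_vanish_rows hZ.1 (baseComp_isComp hW) h
      exact ssc_base_ne_zero hW ((hv.symm.trans h0))
    · have hv := hss (baseComp W M2 N2 hW.1) (baseComp_isComp hW)
      have h0 : SSc Z (baseComp W M2 N2 hW.1) = 0 :=
        SSc_vanish_cols hZ.1 (baseComp_isComp hW) h
      exact ssc_base_ne_zero hW ((hv.symm.trans h0))
  have hM : M2 = M1 := by omega
  have hN : N2 = N1 := by omega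
  subst hM
  subst hN
  funext i
  by_cases hbox : i.1 < M2 ∧ i.2 < N2
  · funext j
    have hc0 := baseComp_isComp hZ
    have hZtop := SSc_insMat (a := baseComp Z M2 N2 hZ.1) hZ.1 hc0 hbox.1 hbox.2 j
    have hWtop := SSc_insMat (a := baseComp Z M2 N2 hZ.1) hW.1 hc0 hbox.1 hbox.2 j
    have hbase : SSc Z (baseComp Z M2 N2 hZ.1) = SSc W (baseComp Z M2 N2 hZ.1) :=
      hss _ hc0
    have hins := hss (insMat (baseComp Z M2 N2 hZ.1) i.1 i.2 hbox.1 hbox.2 j)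
      (insMat_isComp hc0 hbox.1 hbox.2 j)
    rw [hZtop, hWtop, ← hbase] at hins
    have hnz : SSc Z (baseComp Z M2 N2 hZ.1) ≠ 0 := ssc_base_ne_zero hZ
    have hfin := mul_left_cancel₀ hnz hins
    simpa using hfin
  · have hZ0 : Z i = 0 := by
      by_contra hne
      exact hbox (hZ.1 i hne)
    have hW0 : W i = 0 := by
      by_contra hne
      exact hbox (hW.1 i hne)
    rw [hZ0, hW0]

end Compact

end S11

open TwoParam in
/-- two eventually constant functions are equivalent modulo
constants or warping iff their signatures (after differencing) agree. -/
theorem statement11 {d : ℕ} {R : Type*} [CommRing R] [IsDomain R]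
    (X Y : ℕ × ℕ → Fin d → R) (hX : EvC X) (hY : EvC Y) :
    Relation.EqvGen
        (fun U W : ℕ × ℕ → Fin d → R =>
          (∃ (a : Fin 2) (k : ℕ), W = warp a k U) ∨
          (∃ c : Fin d → R, W = U + fun _ => c)) X Y ↔
      ∀ a : RawMat d, a.IsComp →
        SSc (diffOp X) a = SSc (diffOp Y) a := by
  constructor
  · intro h
    clear hX hY
    induction h with
    | rel U W hUW =>
      intro a hc
      rcases hUW with ⟨ax, k, rfl⟩ | ⟨c, rfl⟩
      · rw [S11.diffOp_warp ax k U]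
        exact (S11.SSc_zeroIns ax (diffOp U) k hc).symm
      · rw [S11.diffOp_add_const U c]
    | refl Z => exact fun a _ => rfl
    | symm Z W _ ih => exact fun a hc => (ih a hc).symm
    | trans Z W V _ _ ih1 ih2 => exact fun a hc => (ih1 a hc).trans (ih2 a hc)
  · intro hss
    obtain ⟨M1, N1, hb1⟩ := S11.bnd_diffOp hX
    obtain ⟨M2, N2, hb2⟩ := S11.bnd_diffOp hY
    obtain ⟨X', MX, NX, hrelX, hX', hcX, hssX⟩ :=
      S11.reduce (M1 + N1) M1 N1 X le_rfl hX hb1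
    obtain ⟨Y', MY, NY, hrelY, hY', hcY, hssY⟩ :=
      S11.reduce (M2 + N2) M2 N2 Y le_rfl hY hb2
    have heq : diffOp X' = diffOp Y' :=
      S11.compact_eq hcX hcY (fun a hc => by rw [hssX a hc, hss a hc, ← hssY a hc])
    have hdz : ∀ i, diffOp (fun p => X' p - Y' p) i = 0 := by
      intro i
      have hsplit : diffOp (fun p => X' p - Y' p) i = diffOp X' i - diffOp Y' i := by
        simp only [diffOp]
        abel
      rw [hsplit, heq, sub_self]
    obtain ⟨c, hcst⟩ := S11.diff_zero_const (S11.evc_sub hX' hY') hdz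
    have hXY' : X' = Y' + fun _ => c := by
      funext i
      have h1 := hcst i
      have h2 : X' i = Y' i + c := by
        rw [← h1]
        abel
      exact h2
    have e1 : Relation.EqvGen (S11.rel11 (d := d) (R := R)) Y' X' :=
      Relation.EqvGen.rel Y' X' (Or.inr ⟨c, hXY'⟩)
    have e2 : Relation.EqvGen (S11.rel11 (d := d) (R := R)) X' Y' :=
      Relation.EqvGen.symm Y' X' e1
    have e3 := Relation.EqvGen.trans X X' Y' hrelX e2
    exact Relation.EqvGen.trans X Y' Y e3 (Relation.EqvGen.symm Y Y' hrelY)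
end
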